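/- arXiv:2505.13199 — 6 statements merged into one kernel-verified Lean document; each statement's English description precedes it below -/
import Mathlib

section
/- Let G be a graph and v an eigenvector of L(G) with eigenvalue λ such that all entries of v lie in {-1,0,1} and no edge of G joins two vertices with equal v-values. Then for every vertex j with v_j ∈ {1,-1}, λ = d_j + d̄_j, where d_j is the degree of j and d̄_j is the number of neighbors k of j with v_k ≠ 0. -/
open SimpleGraph Matrix Finset

/-- For a trivalent eigenvector (entries in `{-1,0,1}`) with no equal links,
every vertex valued `±1` satisfies `λ = d_j + d̄_j`, where `d̄_j` is the hard degree
(number of neighbors with nonzero value). -/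
theorem trivalent_nonsoft_eigenvalue {V : Type*} [Fintype V] [DecidableEq V]
    (G : SimpleGraph V) [DecidableRel G.Adj]
    (v : V → ℝ) (hv : v ≠ 0) (l : ℝ)
    (heig : G.lapMatrix ℝ *ᵥ v = l • v)
    (htri : ∀ i, v i = -1 ∨ v i = 0 ∨ v i = 1)
    (hnel : ∀ i j, G.Adj i j → v i ≠ v j)
    (j : V) (hj : v j = 1 ∨ v j = -1) :
    l = (G.degree j : ℝ) + (((G.neighborFinset j).filter fun k => v k ≠ 0).card : ℝ) := by
  have hrow := congrFun heig j
  rw [lapMatrix_mulVec_apply] at hrow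
  have hsum : ∑ k ∈ G.neighborFinset j, v k
      = -v j * (((G.neighborFinset j).filter fun k => v k ≠ 0).card : ℝ) := by
    rw [← Finset.sum_filter_add_sum_filter_not (G.neighborFinset j) (fun k => v k ≠ 0)]
    have h1 : ∑ k ∈ (G.neighborFinset j).filter (fun k => v k ≠ 0), v k
        = ∑ k ∈ (G.neighborFinset j).filter (fun k => v k ≠ 0), (-v j) := by
      apply Finset.sum_congr rfl
      intro k hk
      simp only [Finset.mem_filter, SimpleGraph.mem_neighborFinset] at hk
      have hne := hnel j k hk.1
      rcases htri k with h | h | h <;> rcases hj with h' | h' <;>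
        simp_all <;> linarith
    have h2 : ∑ k ∈ (G.neighborFinset j).filter (fun k => ¬ v k ≠ 0), v k = 0 := by
      apply Finset.sum_eq_zero
      intro k hk
      simp only [Finset.mem_filter, not_not] at hk
      exact hk.2
    rw [h1, h2, Finset.sum_const, add_zero, nsmul_eq_mul, mul_comm]
  rw [hsum] at hrow
  simp only [Pi.smul_apply, smul_eq_mul] at hrow
  rcases hj with h | h <;> rw [h] at hrow <;> linarith
end

section
/- Let G be a connected graph with an eigenvector v of L(G) whose entries all lie in {-1,0,1}, such that no edge joins two vertices with equal v-values, and suppose G has a vertex of degree 1 (a leaf). Then either G is the path P_2 with v = (1,-1) and λ = 2, or G is a star S_{2k+1} with center valued 0, k leaves valued +1 and k leaves valued -1, and λ = 1. -/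
open SimpleGraph Matrix Finset

/-- **Graph with a leaf.** A connected bivalent or trivalent graph without equal links
that has a leaf is either the path `P₂` (with `v = (1,-1)` up to sign and `λ = 2`) or a
star `S_{2k+1}` with soft center, `k` leaves valued `+1`, `k` leaves valued `-1`, and `λ = 1`. -/
theorem graph_with_leaf {V : Type*} [Fintype V] [DecidableEq V]
    (G : SimpleGraph V) [DecidableRel G.Adj] (hconn : G.Connected)
    (v : V → ℝ) (hv : v ≠ 0) (l : ℝ)
    (heig : G.lapMatrix ℝ *ᵥ v = l • v)
    (htri : ∀ i, v i = -1 ∨ v i = 0 ∨ v i = 1)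
    (hnel : ∀ i j, G.Adj i j → v i ≠ v j)
    (hleaf : ∃ x, G.degree x = 1) :
    (∃ a b : V, a ≠ b ∧ (∀ x, x = a ∨ x = b) ∧
      (∀ x y, G.Adj x y ↔ (x = a ∧ y = b) ∨ (x = b ∧ y = a)) ∧
      (v a = 1 ∨ v a = -1) ∧ v b = -v a ∧ l = 2) ∨
    (∃ (c : V) (k : ℕ), v c = 0 ∧
      (∀ x y, G.Adj x y ↔ (x = c ∧ y ≠ c) ∨ (y = c ∧ x ≠ c)) ∧
      (∀ x, x ≠ c → v x = 1 ∨ v x = -1) ∧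
      (Finset.univ.filter fun x => v x = 1).card = k ∧
      (Finset.univ.filter fun x => v x = -1).card = k ∧
      Fintype.card V = 2 * k + 1 ∧ l = 1) := by
  have key : ∀ i, ∑ u ∈ G.neighborFinset i, (v i - v u) = l * v i := by
    intro i
    have h := congrFun heig i
    rw [lapMatrix_mulVec_apply] at h
    rw [Finset.sum_sub_distrib, Finset.sum_const, card_neighborFinset_eq_degree,
      nsmul_eq_mul]
    simpa using h
  obtain ⟨x, hx⟩ := hleaf
  have hcx : (G.neighborFinset x).card = 1 := by
    rw [card_neighborFinset_eq_degree]; exact hx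
  obtain ⟨y, hy⟩ := Finset.card_eq_one.mp hcx
  have hxy : G.Adj x y := by
    have : y ∈ G.neighborFinset x := by rw [hy]; exact mem_singleton_self y
    exact (mem_neighborFinset G x y).mp this
  have hxeq : v x - v y = l * v x := by
    have h := key x
    rwa [hy, Finset.sum_singleton] at h
  have hvxy : v x ≠ v y := hnel x y hxy
  have hsne : v x ≠ 0 := by
    intro h0
    apply hvxy
    rw [h0] at hxeq ⊢
    linarith
  have hs : v x = 1 ∨ v x = -1 := by
    rcases htri x with h | h | h
    · exact Or.inr h
    · exact absurd h hsne
    · exact Or.inl h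
  have hss : v x * v x = 1 := by rcases hs with h | h <;> rw [h] <;> norm_num
  have hvy : v y = 0 ∨ v y = -(v x) := by
    rcases hs with h | h <;> rcases htri y with h' | h' | h' <;>
      first
        | (exact absurd (h.trans h'.symm) hvxy)
        | (left; exact h')
        | (right; rw [h, h']; try norm_num)
  rcases hvy with hvy0 | hvyA
  -- Case B first? keep order: handle hvy0 (star) and hvyA (P2)
  · -- l = 1, star case
    have hl1 : l = 1 := by
      have h1 : 1 * v x = l * v x := by rw [hvy0] at hxeq; linarith
      exact (mul_right_cancel₀ hsne h1).symm
    have leafprop : ∀ w, G.Adj w y → (v w = 1 ∨ v w = -1) ∧ G.neighborFinset w = {y} := by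
      intro w hw
      have hvw_ne : v w ≠ 0 := by rw [← hvy0]; exact hnel w y hw
      have hw1 : v w = 1 ∨ v w = -1 := by
        rcases htri w with h | h | h
        · exact Or.inr h
        · exact absurd h hvw_ne
        · exact Or.inl h
      refine ⟨hw1, ?_⟩
      have hk := key w
      have hk2 : ∑ u ∈ G.neighborFinset w, v w * (v w - v u) = 1 := by
        rw [← Finset.mul_sum, hk, hl1, one_mul]
        rcases hw1 with h | h <;> rw [h] <;> norm_num
      have hterm : ∀ u ∈ G.neighborFinset w, (1 : ℝ) ≤ v w * (v w - v u) := by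
        intro u hu
        have hadj : G.Adj w u := (mem_neighborFinset G w u).mp hu
        have hne : v u ≠ v w := (hnel w u hadj).symm
        have hle : v w * v u ≤ 0 := by
          rcases hw1 with h | h <;> rcases htri u with h' | h' | h' <;>
            norm_num [h, h'] at hne <;> norm_num [h, h']
        have hww2 : v w * v w = 1 := by
          rcases hw1 with h | h <;> rw [h] <;> norm_num
        nlinarith [hww2, hle]
      have hcard_le : (G.neighborFinset w).card ≤ 1 := by
        have hle := Finset.card_nsmul_le_sum (G.neighborFinset w)
          (fun u => v w * (v w - v u)) 1 hterm
        rw [hk2, nsmul_eq_mul, mul_one] at hle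
        exact_mod_cast hle
      have hy_mem : y ∈ G.neighborFinset w := (mem_neighborFinset G w y).mpr hw
      exact Finset.eq_singleton_iff_unique_mem.mpr
        ⟨hy_mem, fun u hu => Finset.card_le_one.mp hcard_le u hu y hy_mem⟩
    have hall : ∀ z, z = y ∨ G.Adj z y := by
      have step : ∀ a b, (a = y ∨ G.Adj a y) → G.Adj a b → (b = y ∨ G.Adj b y) := by
        rintro a b (rfl | ha) hab
        · exact Or.inr hab.symm
        · left
          have hb : b ∈ G.neighborFinset a := (mem_neighborFinset G a b).mpr hab
          rw [(leafprop a ha).2] at hb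
          exact Finset.mem_singleton.mp hb
      have aux : ∀ (z a : V) (p : G.Walk a z), (a = y ∨ G.Adj a y) → z = y ∨ G.Adj z y := by
        intro z a p
        induction p with
        | nil => exact id
        | cons h p ih => exact fun ha => ih (step _ _ ha h)
      intro z
      obtain ⟨w⟩ := hconn.preconnected y z
      exact aux z y w (Or.inl rfl)
    have hadj : ∀ p q, G.Adj p q ↔ (p = y ∧ q ≠ y) ∨ (q = y ∧ p ≠ y) := by
      intro p q
      constructor
      · intro hpq
        rcases hall p with rfl | hp
        · exact Or.inl ⟨rfl, hpq.ne'⟩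
        · right
          have hq : q ∈ G.neighborFinset p := (mem_neighborFinset G p q).mpr hpq
          rw [(leafprop p hp).2] at hq
          exact ⟨Finset.mem_singleton.mp hq, G.ne_of_adj hp⟩
      · rintro (⟨rfl, hq⟩ | ⟨rfl, hp⟩)
        · rcases hall q with rfl | h
          · exact absurd rfl hq
          · exact h.symm
        · rcases hall p with rfl | h
          · exact absurd rfl hp
          · exact h
    have hvals : ∀ p, p ≠ y → v p = 1 ∨ v p = -1 := by
      intro p hp
      rcases hall p with rfl | h
      · exact absurd rfl hp
      · exact (leafprop p h).1
    -- counting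
    have hNy_univ : G.neighborFinset y = Finset.univ.erase y := by
      ext u
      rw [mem_neighborFinset, Finset.mem_erase]
      constructor
      · intro h; exact ⟨(G.ne_of_adj h).symm, Finset.mem_univ u⟩
      · rintro ⟨hu, -⟩
        rcases hall u with rfl | h
        · exact absurd rfl hu
        · exact h.symm
    have hsum0 : ∑ u ∈ Finset.univ.erase y, v u = 0 := by
      have hk := key y
      rw [hNy_univ, hl1, hvy0, mul_zero] at hk
      have h2 : ∑ u ∈ Finset.univ.erase y, ((0 : ℝ) - v u)
          = -∑ u ∈ Finset.univ.erase y, v u := by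
        simp only [zero_sub]
        exact Finset.sum_neg_distrib v
      rw [h2, neg_eq_zero] at hk
      exact hk
    set P := Finset.univ.filter (fun z => v z = 1) with hP
    set M := Finset.univ.filter (fun z => v z = -1) with hM
    have hPM : Finset.univ.erase y = P ∪ M := by
      ext u
      simp only [Finset.mem_erase, Finset.mem_union, hP, hM, Finset.mem_filter,
        Finset.mem_univ, true_and, and_true]
      constructor
      · intro hu; exact hvals u hu
      · intro h h'
        rcases h with h | h <;> rw [h', hvy0] at h <;> norm_num at h
    have hdisj : Disjoint P M := by
      rw [Finset.disjoint_left]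
      intro u huP huM
      rw [hP, Finset.mem_filter] at huP
      rw [hM, Finset.mem_filter] at huM
      rw [huP.2] at huM
      norm_num at huM
    have hsumP : ∑ u ∈ P, v u = (P.card : ℝ) := by
      rw [Finset.sum_congr rfl (fun u hu => (Finset.mem_filter.mp hu).2),
        Finset.sum_const, nsmul_eq_mul, mul_one]
    have hsumM : ∑ u ∈ M, v u = -(M.card : ℝ) := by
      rw [Finset.sum_congr rfl (fun u hu => (Finset.mem_filter.mp hu).2),
        Finset.sum_const, nsmul_eq_mul]
      ring
    have hcards : (P.card : ℝ) = (M.card : ℝ) := by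
      rw [hPM, Finset.sum_union hdisj, hsumP, hsumM] at hsum0
      linarith
    have hcards' : M.card = P.card := by exact_mod_cast hcards.symm
    have hcardV : Fintype.card V = 2 * P.card + 1 := by
      have h1 : (Finset.univ.erase y).card + 1 = Finset.univ.card :=
        Finset.card_erase_add_one (Finset.mem_univ y)
      have h2 : (Finset.univ.erase y).card = P.card + M.card := by
        rw [hPM, Finset.card_union_of_disjoint hdisj]
      rw [Fintype.card, ← h1, h2, hcards']
      ring
    exact Or.inr ⟨y, P.card, hvy0, hadj, hvals, rfl, hcards', hcardV, hl1⟩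
  · -- l = 2, P₂ case
    have hl2 : l = 2 := by
      have h2 : 2 * v x = l * v x := by rw [hvyA] at hxeq; linarith
      exact (mul_right_cancel₀ hsne h2).symm
    have hx_mem : x ∈ G.neighborFinset y := (mem_neighborFinset G y x).mpr hxy.symm
    have hNy : G.neighborFinset y = {x} := by
      have hk := key y
      rw [← Finset.add_sum_erase _ _ hx_mem, hl2, hvyA] at hk
      have hsum : ∑ u ∈ (G.neighborFinset y).erase x, (v y - v u) = 0 := by
        rw [hvyA]
        linarith [hk]
      have hterm : ∀ u ∈ (G.neighborFinset y).erase x,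
          v x * (v y - v u) ≤ -1 := by
        intro u hu
        have hu' : u ∈ G.neighborFinset y := Finset.mem_of_mem_erase hu
        have hadj : G.Adj y u := (mem_neighborFinset G y u).mp hu'
        have hne : v u ≠ v y := (hnel y u hadj).symm
        rw [hvyA] at hne
        have h0 : 0 ≤ v x * v u := by
          rcases hs with h | h <;> rcases htri u with h' | h' | h' <;>
            norm_num [h, h'] at hne <;> norm_num [h, h']
        rw [hvyA]
        nlinarith [hss, h0]
      by_cases hem : ((G.neighborFinset y).erase x).Nonempty
      · exfalso
        have hle := Finset.sum_le_card_nsmul ((G.neighborFinset y).erase x)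
          (fun u => v x * (v y - v u)) (-1) hterm
        have hz : ∑ u ∈ (G.neighborFinset y).erase x, v x * (v y - v u) = 0 := by
          rw [← Finset.mul_sum, hsum, mul_zero]
        rw [hz, nsmul_eq_mul] at hle
        have hcpos : (1 : ℝ) ≤ ((G.neighborFinset y).erase x).card := by
          exact_mod_cast Finset.card_pos.mpr hem
        nlinarith
      · rw [Finset.not_nonempty_iff_eq_empty] at hem
        apply Finset.eq_singleton_iff_unique_mem.mpr
        refine ⟨hx_mem, fun u hu => ?_⟩
        by_contra hne
        have : u ∈ (G.neighborFinset y).erase x := Finset.mem_erase.mpr ⟨hne, hu⟩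
        rw [hem] at this
        exact absurd this (Finset.notMem_empty u)
    have hall : ∀ z, z = x ∨ z = y := by
      have step : ∀ a b, (a = x ∨ a = y) → G.Adj a b → (b = x ∨ b = y) := by
        rintro a b (rfl | rfl) hab
        · right
          have hb : b ∈ G.neighborFinset a := (mem_neighborFinset G a b).mpr hab
          rw [hy] at hb
          exact Finset.mem_singleton.mp hb
        · left
          have hb : b ∈ G.neighborFinset a := (mem_neighborFinset G a b).mpr hab
          rw [hNy] at hb
          exact Finset.mem_singleton.mp hb
      have aux : ∀ (z a : V) (p : G.Walk a z), (a = x ∨ a = y) → z = x ∨ z = y := by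
        intro z a p
        induction p with
        | nil => exact id
        | cons h p ih => exact fun ha => ih (step _ _ ha h)
      intro z
      obtain ⟨w⟩ := hconn.preconnected x z
      exact aux z x w (Or.inl rfl)
    refine Or.inl ⟨x, y, G.ne_of_adj hxy, hall, ?_, hs, hvyA, hl2⟩
    intro p q
    constructor
    · intro hpq
      rcases hall p with rfl | rfl
      · left
        have hq : q ∈ G.neighborFinset p := (mem_neighborFinset G p q).mpr hpq
        rw [hy] at hq
        exact ⟨rfl, Finset.mem_singleton.mp hq⟩
      · right
        have hq : q ∈ G.neighborFinset p := (mem_neighborFinset G p q).mpr hpq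
        rw [hNy] at hq
        exact ⟨rfl, Finset.mem_singleton.mp hq⟩
    · rintro (⟨rfl, rfl⟩ | ⟨rfl, rfl⟩)
      · exact hxy
      · exact hxy.symm
end

section
/- Let T be a tree with an eigenvector v of L(T) whose entries all lie in {-1,0,1} and take the value 0 somewhere, and such that no edge joins two equal-valued vertices. Then T is a star S_{2k+1} with soft center and the eigenvalue is 1. -/
open SimpleGraph Matrix

/-- If `x` has unique neighbor `s`, and there is a walk from `x` to `t` avoiding `s`,
then `t = x`. -/
private lemma walk_end_eq_of_unique_nbr {V : Type*} [Fintype V] [DecidableEq V]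
    {G : SimpleGraph V} [DecidableRel G.Adj] {x s t : V}
    (h : G.neighborFinset x = {s}) (q : G.Walk x t) (hs : s ∉ q.support) : t = x := by
  cases q with
  | nil => rfl
  | @cons _ y _ h' r =>
    exfalso
    have hy : y ∈ G.neighborFinset x := (G.mem_neighborFinset x y).mpr h'
    rw [h, Finset.mem_singleton] at hy
    subst hy
    refine hs ?_
    rw [SimpleGraph.Walk.support_cons, List.mem_cons]
    exact Or.inr r.start_mem_support

/-- A trivalent tree without equal links whose eigenvector vanishes somewhere is a star
`S_{2k+1}` with soft center, and the eigenvalue is `1`. -/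
theorem trivalent_tree_star {V : Type*} [Fintype V] [DecidableEq V]
    (G : SimpleGraph V) [DecidableRel G.Adj] (hT : G.IsTree)
    (v : V → ℝ) (hv : v ≠ 0) (l : ℝ)
    (heig : G.lapMatrix ℝ *ᵥ v = l • v)
    (htri : ∀ i, v i = -1 ∨ v i = 0 ∨ v i = 1)
    (hsoft : ∃ i, v i = 0)
    (hnel : ∀ i j, G.Adj i j → v i ≠ v j) :
    ∃ (c : V) (k : ℕ), v c = 0 ∧ Fintype.card V = 2 * k + 1 ∧
      (∀ x y, G.Adj x y ↔ (x = c ∧ y ≠ c) ∨ (y = c ∧ x ≠ c)) ∧ l = 1 := by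
  classical
  obtain ⟨c, hc⟩ := hsoft
  -- the row equation of the eigenvalue equation
  have hrow : ∀ i, (G.degree i : ℝ) * v i - ∑ u ∈ G.neighborFinset i, v u = l * v i := by
    intro i
    have h := congrFun heig i
    rw [lapMatrix_mulVec_apply] at h
    simpa using h
  -- there is a vertex with nonzero value
  obtain ⟨j₀, hj₀⟩ : ∃ j, v j ≠ 0 := by
    by_contra h
    push_neg at h
    exact hv (funext h)
  have hcj : c ≠ j₀ := fun h => hj₀ (h ▸ hc)
  have hnontriv : Nontrivial V := ⟨c, j₀, hcj⟩
  have hcard2 : 2 ≤ Fintype.card V := Fintype.one_lt_card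
  -- every vertex has positive degree
  have hdegpos : ∀ u : V, 0 < G.degree u := by
    intro u
    rw [G.degree_pos_iff_exists_adj u]
    obtain ⟨w, hw⟩ := exists_ne u
    obtain ⟨p⟩ := hT.isConnected.preconnected u w
    cases p with
    | nil => exact absurd rfl hw
    | cons h' r => exact ⟨_, h'⟩
  -- there exists a leaf
  obtain ⟨u₀, hu₀⟩ : ∃ u : V, G.degree u = 1 := by
    by_contra h
    push_neg at h
    have h2 : ∀ u : V, 2 ≤ G.degree u := by
      intro u
      rcases Nat.lt_or_ge (G.degree u) 2 with hlt | hge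
      · interval_cases hdeg : G.degree u
        · exact absurd hdeg (hdegpos u).ne'
        · exact absurd hdeg (h u)
      · exact hge
    have hsum : ∑ u : V, G.degree u = 2 * G.edgeFinset.card :=
      G.sum_degrees_eq_twice_card_edges
    have hedge : G.edgeFinset.card + 1 = Fintype.card V := hT.card_edgeFinset
    have hge : 2 * Fintype.card V ≤ ∑ u : V, G.degree u := by
      calc 2 * Fintype.card V = ∑ _u : V, 2 := by
            simp [Finset.sum_const, mul_comm]
        _ ≤ ∑ u : V, G.degree u := Finset.sum_le_sum fun u _ => h2 u
    omega
  -- every leaf has nonzero value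
  have hleaf_nbr : ∀ u : V, G.degree u = 1 → ∃ w, G.neighborFinset u = {w} := by
    intro u hu
    exact Finset.card_eq_one.mp (by rwa [← G.card_neighborFinset_eq_degree] at hu)
  have hleafnz : ∀ u : V, G.degree u = 1 → v u ≠ 0 := by
    intro u hu hvu
    obtain ⟨w, hw⟩ := hleaf_nbr u hu
    have hadj : G.Adj u w := (G.mem_neighborFinset u w).mp (hw ▸ Finset.mem_singleton_self w)
    have := hrow u
    rw [hw, Finset.sum_singleton, hvu] at this
    simp only [mul_zero, zero_sub, neg_eq_zero] at this
    exact hnel u w hadj (by rw [hvu, this])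
  -- the eigenvalue is 1 or 2 (from any leaf)
  have hl12 : l = 1 ∨ l = 2 := by
    obtain ⟨w, hw⟩ := hleaf_nbr u₀ hu₀
    have hadj : G.Adj u₀ w := (G.mem_neighborFinset u₀ w).mp (hw ▸ Finset.mem_singleton_self w)
    have hne := hnel u₀ w hadj
    have hr := hrow u₀
    rw [hw, Finset.sum_singleton, hu₀] at hr
    have hnz := hleafnz u₀ hu₀
    push_cast at hr
    rcases htri u₀ with h1 | h1 | h1 <;> rcases htri w with h2 | h2 | h2 <;>
      rw [h1, h2] at hr <;> first
        | (exact absurd h1 hnz)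
        | (exact absurd (h1.trans h2.symm) hne)
        | (left; linarith)
        | (right; linarith)
  -- no edge joins a (+1)-vertex and a (-1)-vertex
  have hB : ∀ a b, G.Adj a b → v a = 1 → v b = -1 → False := by
    intro a b hab ha hb
    -- degree of a is 1 with unique neighbor b
    have hbmem : b ∈ G.neighborFinset a := (G.mem_neighborFinset a b).mpr hab
    have hSa : ∑ u ∈ G.neighborFinset a, v u ≤ -1 := by
      calc ∑ u ∈ G.neighborFinset a, v u
          ≤ ∑ u ∈ G.neighborFinset a, (if u = b then (-1 : ℝ) else 0) := by
            refine Finset.sum_le_sum fun u hu => ?_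
            by_cases h : u = b
            · simp [h, hb]
            · simp only [h, if_false]
              have hadj : G.Adj a u := (G.mem_neighborFinset a u).mp hu
              have hvne := hnel a u hadj
              rcases htri u with h' | h' | h'
              · rw [h']; norm_num
              · rw [h']
              · exact absurd (ha.trans h'.symm) hvne
        _ = -1 := by rw [Finset.sum_ite_eq' _ b fun _ => (-1 : ℝ)]; simp [hbmem]
    have hdega : (1 : ℝ) ≤ (G.degree a : ℝ) := by
      exact_mod_cast Nat.one_le_iff_ne_zero.mpr (hdegpos a).ne'
    have hra := hrow a
    rw [ha, mul_one, mul_one] at hra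
    have hl2 : l = 2 := by
      rcases hl12 with h | h
      · exfalso; rw [h] at hra; linarith
      · exact h
    have hdega1 : G.degree a = 1 := by
      have : (G.degree a : ℝ) = 1 := by rw [hl2] at hra; linarith
      exact_mod_cast this
    -- degree of b is 1 with unique neighbor a
    have hamem : a ∈ G.neighborFinset b := (G.mem_neighborFinset b a).mpr hab.symm
    have hSb : (1 : ℝ) ≤ ∑ u ∈ G.neighborFinset b, v u := by
      calc (1 : ℝ) = ∑ u ∈ G.neighborFinset b, (if u = a then (1 : ℝ) else 0) := by
            rw [Finset.sum_ite_eq' _ a fun _ => (1 : ℝ)]; simp [hamem]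
        _ ≤ ∑ u ∈ G.neighborFinset b, v u := by
            refine Finset.sum_le_sum fun u hu => ?_
            by_cases h : u = a
            · simp [h, ha]
            · simp only [h, if_false]
              have hadj : G.Adj b u := (G.mem_neighborFinset b u).mp hu
              have hvne := hnel b u hadj
              rcases htri u with h' | h' | h'
              · exact absurd (hb.trans h'.symm) hvne
              · rw [h']
              · rw [h']; norm_num
    have hdegb : (1 : ℝ) ≤ (G.degree b : ℝ) := by
      exact_mod_cast Nat.one_le_iff_ne_zero.mpr (hdegpos b).ne'
    have hrb := hrow b
    rw [hb] at hrb
    have hdegb1 : G.degree b = 1 := by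
      have : (G.degree b : ℝ) = 1 := by rw [hl2] at hrb; nlinarith
      exact_mod_cast this
    -- unique neighbors
    obtain ⟨w, hw⟩ := hleaf_nbr a hdega1
    have hwb : G.neighborFinset a = {b} := by
      rw [hw]; congr 1
      have := hw ▸ hbmem
      exact (Finset.mem_singleton.mp this).symm
    obtain ⟨w', hw'⟩ := hleaf_nbr b hdegb1
    have hwa : G.neighborFinset b = {a} := by
      rw [hw']; congr 1
      have := hw' ▸ hamem
      exact (Finset.mem_singleton.mp this).symm
    -- path from a to the soft vertex c gives a contradiction
    have hca : c ≠ a := fun h => by rw [h, ha] at hc; norm_num at hc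
    have hcb : c ≠ b := fun h => by rw [h, hb] at hc; norm_num at hc
    obtain ⟨p, hp, -⟩ := hT.existsUnique_path a c
    cases p with
    | nil => exact hca rfl
    | @cons _ y _ h' r =>
      have hy : y ∈ G.neighborFinset a := (G.mem_neighborFinset a y).mpr h'
      rw [hwb, Finset.mem_singleton] at hy
      subst hy
      rw [SimpleGraph.Walk.cons_isPath_iff] at hp
      exact hcb (walk_end_eq_of_unique_nbr hwa r hp.2)
  -- every edge has a soft endpoint
  have hedge0 : ∀ a b, G.Adj a b → v a = 0 ∨ v b = 0 := by
    intro a b hab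
    by_contra h
    push_neg at h
    have hne := hnel a b hab
    rcases htri a with h1 | h1 | h1 <;> rcases htri b with h2 | h2 | h2
    · exact hne (h1.trans h2.symm)
    · exact h.2 h2
    · exact hB b a hab.symm h2 h1
    · exact h.1 h1
    · exact h.1 h1
    · exact h.1 h1
    · exact hB a b hab h1 h2
    · exact h.2 h2
    · exact hne (h1.trans h2.symm)
  -- every nonzero vertex's neighbors are all soft, hence it has degree l
  have hnbr0 : ∀ a, v a ≠ 0 → ∀ u ∈ G.neighborFinset a, v u = 0 := by
    intro a ha u hu
    have hadj : G.Adj a u := (G.mem_neighborFinset a u).mp hu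
    rcases hedge0 a u hadj with h | h
    · exact absurd h ha
    · exact h
  have hdegl : ∀ a, v a ≠ 0 → (G.degree a : ℝ) = l := by
    intro a ha
    have hr := hrow a
    rw [Finset.sum_eq_zero (hnbr0 a ha)] at hr
    have := sub_zero ((G.degree a : ℝ) * v a) ▸ hr
    exact mul_right_cancel₀ ha this
  -- the eigenvalue is 1
  have hl1 : l = 1 := by
    have := hdegl u₀ (hleafnz u₀ hu₀)
    rw [hu₀] at this
    exact_mod_cast this.symm
  -- every nonzero vertex has degree 1
  have hdeg1 : ∀ a, v a ≠ 0 → G.degree a = 1 := by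
    intro a ha
    have := hdegl a ha
    rw [hl1] at this
    exact_mod_cast this
  -- c is the unique soft vertex
  have huniq : ∀ z, v z = 0 → z = c := by
    intro z hz
    by_contra hzc
    obtain ⟨p, hp, -⟩ := hT.existsUnique_path z c
    cases p with
    | nil => exact hzc rfl
    | @cons _ y _ h' r =>
      have hyz : v y ≠ 0 := by
        intro h
        exact hnel z y h' (hz.trans h.symm)
      have hdy : G.degree y = 1 := hdeg1 y hyz
      obtain ⟨w, hw⟩ := hleaf_nbr y hdy
      have hzy : z ∈ G.neighborFinset y := (G.mem_neighborFinset y z).mpr h'.symm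
      have hwz : G.neighborFinset y = {z} := by
        rw [hw]; congr 1
        exact (Finset.mem_singleton.mp (hw ▸ hzy)).symm
      rw [SimpleGraph.Walk.cons_isPath_iff] at hp
      have := walk_end_eq_of_unique_nbr hwz r hp.2
      exact hyz (this ▸ hc)
  -- every vertex other than c is adjacent to c
  have hadjc : ∀ y, y ≠ c → G.Adj c y := by
    intro y hyc
    have hyz : v y ≠ 0 := fun h => hyc (huniq y h)
    have hdy : G.degree y = 1 := hdeg1 y hyz
    obtain ⟨w, hw⟩ := hleaf_nbr y hdy
    have hadj : G.Adj y w := (G.mem_neighborFinset y w).mp (hw ▸ Finset.mem_singleton_self w)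
    have hw0 : v w = 0 := by
      rcases hedge0 y w hadj with h | h
      · exact absurd h hyz
      · exact h
    have := huniq w hw0
    exact (this ▸ hadj).symm
  -- adjacency characterization
  have hadj_char : ∀ x y, G.Adj x y ↔ (x = c ∧ y ≠ c) ∨ (y = c ∧ x ≠ c) := by
    intro x y
    constructor
    · intro hxy
      by_cases hx : x = c
      · exact Or.inl ⟨hx, fun h => G.ne_of_adj hxy (hx.trans h.symm)⟩
      · right
        refine ⟨?_, hx⟩
        have hxz : v x ≠ 0 := fun h => hx (huniq x h)
        rcases hedge0 x y hxy with h | h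
        · exact absurd h hxz
        · exact huniq y h
    · rintro (⟨hx, hy⟩ | ⟨hy, hx⟩)
      · exact hx ▸ hadjc y hy
      · exact hy ▸ (hadjc x hx).symm
  -- counting: the neighbors of c are all other vertices, and their values sum to zero
  have hNc : G.neighborFinset c = Finset.univ.erase c := by
    ext u
    rw [G.mem_neighborFinset c u, hadj_char, Finset.mem_erase]
    constructor
    · rintro (⟨-, h⟩ | ⟨h, habs⟩)
      · exact ⟨h, Finset.mem_univ u⟩
      · exact absurd rfl habs
    · rintro ⟨h, -⟩
      exact Or.inl ⟨rfl, h⟩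
  have hsum0 : ∑ u : V, v u = 0 := by
    have hr := hrow c
    rw [hc, mul_zero, mul_zero, zero_sub, neg_eq_zero, hNc] at hr
    rw [← Finset.add_sum_erase _ v (Finset.mem_univ c), hc, hr, add_zero]
  -- partition by values
  set A := Finset.univ.filter (fun u => v u = 1) with hA
  set B := Finset.univ.filter (fun u => v u = -1) with hBdef
  have hsum_eq : ∑ u : V, v u = (A.card : ℝ) - (B.card : ℝ) := by
    have : ∀ u : V, v u = (if v u = 1 then (1 : ℝ) else 0) - (if v u = -1 then 1 else 0) := by
      intro u
      rcases htri u with h | h | h <;> rw [h] <;> norm_num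
    rw [Finset.sum_congr rfl fun u _ => this u, Finset.sum_sub_distrib,
      Finset.sum_boole, Finset.sum_boole]
  have hAB : A.card = B.card := by
    have : (A.card : ℝ) = (B.card : ℝ) := by
      rw [hsum_eq] at hsum0; linarith
    exact_mod_cast this
  have hcardV : Fintype.card V = 2 * A.card + 1 := by
    have hfilter := Finset.card_filter_add_card_filter_not
      (s := (Finset.univ : Finset V)) (p := fun u => v u = 0)
    have hZ : Finset.univ.filter (fun u => v u = 0) = {c} := by
      ext u
      simp only [Finset.mem_filter, Finset.mem_univ, true_and, Finset.mem_singleton]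
      exact ⟨fun h => huniq u h, fun h => h ▸ hc⟩
    have hNZ : Finset.univ.filter (fun u => ¬ v u = 0) = A ∪ B := by
      ext u
      simp only [Finset.mem_filter, Finset.mem_univ, true_and, Finset.mem_union, hA, hBdef]
      constructor
      · intro h
        rcases htri u with h' | h' | h'
        · exact Or.inr h'
        · exact absurd h' h
        · exact Or.inl h'
      · rintro (h | h) <;> rw [h] <;> norm_num
    have hdisj : Disjoint A B := by
      rw [Finset.disjoint_left]
      intro u hu hu'
      rw [hA, Finset.mem_filter] at hu
      rw [hBdef, Finset.mem_filter] at hu'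
      rw [hu.2] at hu'
      norm_num at hu'
    have hunion : (A ∪ B).card = A.card + B.card := Finset.card_union_of_disjoint hdisj
    rw [hZ, hNZ, Finset.card_singleton, hunion, ← hAB, Finset.card_univ] at hfilter
    omega
  exact ⟨c, A.card, hc, hcardV, hadj_char, hl1⟩
end

section
/- Let G be a connected unicyclic graph (connected with exactly n edges on n vertices) with an eigenvector v of L(G) with entries in {-1,0,1} and no edge joining equal-valued vertices. Then G is a cycle, and one of the following holds: G = C_{4k} with λ = 2 and eigenvector pattern (1,0,-1,0) repeated; G = C_{3k} with λ = 3 and pattern (1,0,-1) repeated; or G = C_{2k} with λ = 4 and pattern (1,-1) repeated. -/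
open SimpleGraph Matrix Finset

set_option linter.unusedSectionVars false
set_option maxHeartbeats 1000000

namespace TrivAux

variable {V : Type*} [Fintype V] [DecidableEq V] (G : SimpleGraph V) [DecidableRel G.Adj]

lemma closed_walk {S : Set V} (hS : ∀ ⦃x y⦄, x ∈ S → G.Adj x y → y ∈ S) {a b : V}
    (w : G.Walk a b) (ha : a ∈ S) : b ∈ S := by
  induction w with
  | nil => exact ha
  | cons h _ ih => exact ih (hS ha h)

lemma closed_univ {S : Set V} (hconn : G.Connected)
    (hS : ∀ ⦃x y⦄, x ∈ S → G.Adj x y → y ∈ S) {a : V} (ha : a ∈ S) : ∀ b, b ∈ S := by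
  intro b
  obtain ⟨w⟩ := hconn.preconnected a b
  exact closed_walk G hS w ha

lemma sum_degree_of_cover {S : Finset V}
    (hcov : ∀ e ∈ G.edgeFinset, ∃ x ∈ S, x ∈ e)
    (hdisj : ∀ x ∈ S, ∀ y ∈ S, x ≠ y → ¬ G.Adj x y) :
    ∑ x ∈ S, G.degree x = G.edgeFinset.card := by
  have hun : G.edgeFinset = S.biUnion (fun x => G.incidenceFinset x) := by
    apply Finset.Subset.antisymm
    · intro e he
      obtain ⟨x, hx, hxe⟩ := hcov e he
      exact Finset.mem_biUnion.2 ⟨x, hx, ((Set.mem_toFinset) : e ∈ G.incidenceFinset _ ↔ _).2 ⟨mem_edgeFinset.1 he, hxe⟩⟩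
    · intro e he
      obtain ⟨x, _, hxe⟩ := Finset.mem_biUnion.1 he
      exact mem_edgeFinset.2 (((Set.mem_toFinset) : e ∈ G.incidenceFinset _ ↔ _).1 hxe).1
  rw [hun, Finset.card_biUnion, ]
  · simp [card_incidenceFinset_eq_degree]
  · intro x hx y hy hxy
    simp only [Finset.disjoint_left]
    intro e hex hey
    obtain ⟨he, hxe⟩ := ((Set.mem_toFinset) : e ∈ G.incidenceFinset _ ↔ _).1 hex
    obtain ⟨_, hye⟩ := ((Set.mem_toFinset) : e ∈ G.incidenceFinset _ ↔ _).1 hey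
    induction e with
    | h a b =>
      have hadj : G.Adj a b := he
      rcases Sym2.mem_iff.1 hxe with rfl | rfl <;> rcases Sym2.mem_iff.1 hye with rfl | rfl
      · exact hxy rfl
      · exact hdisj x hx y hy hxy hadj
      · exact hdisj x hx y hy hxy hadj.symm
      · exact hxy rfl

end TrivAux

namespace TrivAux

variable {V : Type*} [Fintype V] [DecidableEq V] (G : SimpleGraph V) [DecidableRel G.Adj]
  (v : V → ℝ)

/-- number of +1-valued neighbors -/
noncomputable def pc (x : V) : ℕ := #{u ∈ G.neighborFinset x | v u = 1}
/-- number of -1-valued neighbors -/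
noncomputable def mc (x : V) : ℕ := #{u ∈ G.neighborFinset x | v u = -1}
/-- number of 0-valued neighbors -/
noncomputable def zc (x : V) : ℕ := #{u ∈ G.neighborFinset x | v u = 0}

lemma nb_sum (htri : ∀ i, v i = -1 ∨ v i = 0 ∨ v i = 1) (x : V) :
    ∑ u ∈ G.neighborFinset x, v u = (pc G v x : ℝ) - (mc G v x : ℝ) := by
  classical
  have h : ∀ u ∈ G.neighborFinset x,
      v u = (if v u = 1 then (1:ℝ) else 0) - (if v u = -1 then (1:ℝ) else 0) := by
    intro u _
    rcases htri u with h | h | h <;> rw [h] <;> norm_num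
  rw [Finset.sum_congr rfl h, Finset.sum_sub_distrib, Finset.sum_boole, Finset.sum_boole]
  rfl

lemma nb_card (htri : ∀ i, v i = -1 ∨ v i = 0 ∨ v i = 1) (x : V) :
    G.degree x = pc G v x + zc G v x + mc G v x := by
  classical
  rw [← card_neighborFinset_eq_degree, pc, zc, mc]
  rw [← Finset.card_filter_add_card_filter_not (s := G.neighborFinset x)
    (p := fun u => v u = 1), add_assoc]
  congr 1
  rw [← Finset.card_filter_add_card_filter_not
    (s := {u ∈ G.neighborFinset x | ¬ v u = 1}) (p := fun u => v u = 0)]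
  rw [Finset.filter_filter, Finset.filter_filter]
  congr 1
  · congr 1
    ext u
    simp only [Finset.mem_filter]
    constructor
    · rintro ⟨h1, _, h3⟩; exact ⟨h1, h3⟩
    · rintro ⟨h1, h2⟩; exact ⟨h1, by rw [h2]; norm_num, h2⟩
  · congr 1
    ext u
    simp only [Finset.mem_filter]
    constructor
    · rintro ⟨h1, h2, h3⟩
      rcases htri u with h | h | h
      · exact ⟨h1, h⟩
      · exact absurd h h3
      · exact absurd h h2
    · rintro ⟨h1, h2⟩
      exact ⟨h1, by rw [h2]; norm_num, by rw [h2]; norm_num⟩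

end TrivAux

namespace TrivAux

variable {V : Type*} [Fintype V] [DecidableEq V] {G : SimpleGraph V} [DecidableRel G.Adj]
  {v : V → ℝ} {l : ℝ}

lemma filter_all {α : Type*} {s : Finset α} {p : α → Prop} [DecidablePred p]
    (h : #s ≤ #(s.filter p)) : ∀ u ∈ s, p u := by
  have heq := Finset.eq_of_subset_of_card_le (Finset.filter_subset p s) h
  intro u hu
  rw [← heq] at hu
  exact (Finset.mem_filter.1 hu).2

lemma eigen_eq (heig : G.lapMatrix ℝ *ᵥ v = l • v) (x : V) :
    (G.degree x : ℝ) * v x - ∑ u ∈ G.neighborFinset x, v u = l * v x := by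
  have h := congrFun heig x
  rwa [lapMatrix_mulVec_apply] at h

variable (heig : G.lapMatrix ℝ *ᵥ v = l • v) (htri : ∀ i, v i = -1 ∨ v i = 0 ∨ v i = 1)
  (hnel : ∀ i j, G.Adj i j → v i ≠ v j)

include heig htri hnel in
lemma at1 {x : V} (hx : v x = 1) :
    pc G v x = 0 ∧ l = (G.degree x : ℝ) + (mc G v x : ℝ) := by
  have hpc : pc G v x = 0 := by
    rw [pc, Finset.card_eq_zero, Finset.filter_eq_empty_iff]
    intro u hu
    rw [mem_neighborFinset] at hu
    rw [← hx]
    exact (hnel x u hu).symm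
  have he := eigen_eq heig x
  rw [nb_sum G v htri x, hpc, hx] at he
  push_cast at he
  exact ⟨hpc, by linarith⟩

include heig htri hnel in
lemma at_neg1 {x : V} (hx : v x = -1) :
    mc G v x = 0 ∧ l = (G.degree x : ℝ) + (pc G v x : ℝ) := by
  have hmc : mc G v x = 0 := by
    rw [mc, Finset.card_eq_zero, Finset.filter_eq_empty_iff]
    intro u hu
    rw [mem_neighborFinset] at hu
    rw [← hx]
    exact (hnel x u hu).symm
  have he := eigen_eq heig x
  rw [nb_sum G v htri x, hmc, hx] at he
  push_cast at he
  exact ⟨hmc, by linarith⟩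

include heig htri hnel in
lemma at0 {x : V} (hx : v x = 0) :
    pc G v x = mc G v x ∧ G.degree x = 2 * pc G v x := by
  have hzc : zc G v x = 0 := by
    rw [zc, Finset.card_eq_zero, Finset.filter_eq_empty_iff]
    intro u hu
    rw [mem_neighborFinset] at hu
    rw [← hx]
    exact (hnel x u hu).symm
  have he := eigen_eq heig x
  rw [nb_sum G v htri x, hx] at he
  have hpm : pc G v x = mc G v x := by
    have : (pc G v x : ℝ) = (mc G v x : ℝ) := by linarith
    exact_mod_cast this
  refine ⟨hpm, ?_⟩
  rw [nb_card G v htri x, hzc, hpm]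
  ring

end TrivAux

namespace TrivAux

variable {V : Type*} [Fintype V] [DecidableEq V] {G : SimpleGraph V} [DecidableRel G.Adj]

lemma card3 (hconn : G.Connected) (huni : G.edgeFinset.card = Fintype.card V) :
    3 ≤ Fintype.card V := by
  have h1 : 1 ≤ Fintype.card V := by
    have : Nonempty V := hconn.nonempty
    exact Fintype.card_pos
  have h2 := G.card_edgeFinset_le_card_choose_two
  rw [huni, Nat.choose_two_right] at h2
  by_contra h
  interval_cases h3 : Fintype.card V <;> omega

lemma degpos (hconn : G.Connected) (hcard : 2 ≤ Fintype.card V) (x : V) :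
    0 < G.degree x := by
  rw [G.degree_pos_iff_exists_adj]
  obtain ⟨y, hy⟩ := Fintype.exists_ne_of_one_lt_card (by omega) x
  obtain ⟨w⟩ := hconn.preconnected x y
  cases w with
  | nil => exact absurd rfl hy.symm
  | cons h _ => exact ⟨_, h⟩

end TrivAux

namespace TrivAux

variable {V : Type*} [Fintype V] [DecidableEq V] {G : SimpleGraph V} [DecidableRel G.Adj]
  {v : V → ℝ} {l : ℝ}

variable (hconn : G.Connected) (huni : G.edgeFinset.card = Fintype.card V)
  (heig : G.lapMatrix ℝ *ᵥ v = l • v) (htri : ∀ i, v i = -1 ∨ v i = 0 ∨ v i = 1)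
  (hnel : ∀ i j, G.Adj i j → v i ≠ v j)

include hconn huni heig htri hnel in
lemma no_leaf_pos {x : V} (hx : v x = 1) (hd : G.degree x = 1) : False := by
  have hcard := card3 hconn huni
  have hdpos : ∀ y, 0 < G.degree y := degpos hconn (by omega)
  obtain ⟨hpcx, hlx⟩ := at1 heig htri hnel hx
  have hmcx : mc G v x ≤ 1 := by
    have := nb_card G v htri x
    omega
  rcases Nat.le_one_iff_eq_zero_or_eq_one.1 hmcx with hmc0 | hmc1
  · -- l = 1 case
    have hl1 : l = 1 := by rw [hlx, hd, hmc0]; norm_num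
    have hplus : ∀ y, v y = 1 → G.degree y = 1 ∧ mc G v y = 0 := by
      intro y hy
      obtain ⟨_, hly⟩ := at1 heig htri hnel hy
      have : G.degree y + mc G v y = 1 := by
        have : ((G.degree y + mc G v y : ℕ) : ℝ) = 1 := by push_cast; linarith
        exact_mod_cast this
      have := hdpos y
      omega
    have hminus : ∀ y, v y = -1 → G.degree y = 1 ∧ pc G v y = 0 := by
      intro y hy
      obtain ⟨_, hly⟩ := at_neg1 heig htri hnel hy
      have : G.degree y + pc G v y = 1 := by
        have : ((G.degree y + pc G v y : ℕ) : ℝ) = 1 := by push_cast; linarith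
        exact_mod_cast this
      have := hdpos y
      omega
    classical
    set S : Finset V := Finset.univ.filter (fun y => v y ≠ 0) with hS
    have hmemS : ∀ y, y ∈ S ↔ v y ≠ 0 := by
      intro y; simp [hS]
    have hsum : ∑ y ∈ S, G.degree y = G.edgeFinset.card := by
      apply sum_degree_of_cover
      · intro e he
        induction e with
        | h a b =>
          have hadj : G.Adj a b := mem_edgeFinset.1 he
          by_cases ha : v a = 0
          · refine ⟨b, (hmemS b).2 ?_, Sym2.mem_mk_right a b⟩
            intro hb
            exact hnel a b hadj (by rw [ha, hb])
          · exact ⟨a, (hmemS a).2 ha, Sym2.mem_mk_left a b⟩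
      · intro a ha b hb hab hadj
        have ha' := (hmemS a).1 ha
        have hb' := (hmemS b).1 hb
        have key : ∀ c d, G.Adj c d → v c = 1 → v d = -1 → False := by
          intro c d hcd hc hd2
          have hpa := (hplus c hc).2
          have hmem : d ∈ {u ∈ G.neighborFinset c | v u = -1} := by
            simp [mem_neighborFinset, hcd, hd2]
          rw [show {u ∈ G.neighborFinset c | v u = -1} = (∅ : Finset V) from
            Finset.card_eq_zero.1 hpa] at hmem
          exact absurd hmem (Finset.notMem_empty d)
        rcases htri a with h1 | h1 | h1
        · rcases htri b with h2 | h2 | h2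
          · exact hnel a b hadj (h1.trans h2.symm)
          · exact hb' h2
          · exact key b a hadj.symm h2 h1
        · exact ha' h1
        · rcases htri b with h2 | h2 | h2
          · exact key a b hadj h1 h2
          · exact hb' h2
          · exact hnel a b hadj (h1.trans h2.symm)
    have hsum2 : ∑ y ∈ S, G.degree y = S.card := by
      rw [Finset.sum_congr rfl (fun y hy => ?_), Finset.sum_const, smul_eq_mul, mul_one]
      rcases htri y with h1 | h1 | h1
      · exact (hminus y h1).1
      · exact absurd h1 ((hmemS y).1 hy)
      · exact (hplus y h1).1
    have hScard : S.card = Fintype.card V := by rw [← hsum2, hsum, huni]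
    have hSuniv : S = Finset.univ :=
      Finset.eq_of_subset_of_card_le (Finset.subset_univ S) (by rw [hScard, Finset.card_univ])
    -- but the neighbor of x has value 0
    obtain ⟨w, hw⟩ := G.degree_pos_iff_exists_adj x |>.1 (hdpos x)
    have hw1 : v w ≠ 1 := fun h => hnel x w hw (by rw [hx, h])
    have hwm : v w ≠ -1 := by
      intro h
      have : w ∈ {u ∈ G.neighborFinset x | v u = -1} := by
        simp [mem_neighborFinset, hw, h]
      rw [show {u ∈ G.neighborFinset x | v u = -1} = (∅ : Finset V) from
        Finset.card_eq_zero.1 hmc0] at this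
      exact absurd this (Finset.notMem_empty w)
    have hw0 : v w = 0 := by rcases htri w with h | h | h; exacts [absurd h hwm, h, absurd h hw1]
    have : w ∈ S := hSuniv ▸ Finset.mem_univ w
    exact (hmemS w).1 this hw0
  · -- l = 2 case: two adjacent leaves
    have hl2 : l = 2 := by rw [hlx, hd, hmc1]; norm_num
    obtain ⟨w, hw⟩ := G.degree_pos_iff_exists_adj x |>.1 (hdpos x)
    have hwN : w ∈ G.neighborFinset x := (mem_neighborFinset G x w).2 hw
    have hNx : G.neighborFinset x = {w} := by
      symm
      apply Finset.eq_of_subset_of_card_le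
      · intro u hu; rw [Finset.mem_singleton.1 hu]; exact hwN
      · rw [card_neighborFinset_eq_degree, hd, Finset.card_singleton]
    have hvw : v w = -1 := by
      have hall := filter_all (s := G.neighborFinset x) (p := fun u => v u = -1)
        (by rw [card_neighborFinset_eq_degree, hd, ← mc]; omega)
      exact hall w hwN
    obtain ⟨hmcw, hlw⟩ := at_neg1 heig htri hnel hvw
    have hpcw : 1 ≤ pc G v w := by
      apply Finset.card_pos.2
      exact ⟨x, by simp [pc, mem_neighborFinset, hw.symm, hx]⟩
    have hnat : G.degree w + pc G v w = 2 := by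
      have : ((G.degree w + pc G v w : ℕ) : ℝ) = 2 := by push_cast; linarith
      exact_mod_cast this
    have hdw : G.degree w = 1 := by have := hdpos w; omega
    have hNw : G.neighborFinset w = {x} := by
      symm
      apply Finset.eq_of_subset_of_card_le
      · intro u hu
        rw [Finset.mem_singleton.1 hu]
        exact (mem_neighborFinset G w x).2 hw.symm
      · rw [card_neighborFinset_eq_degree, hdw, Finset.card_singleton]
    -- the set {x, w} is closed under adjacency
    have hall := closed_univ G hconn (S := {x, w}) (a := x) ?_ (Set.mem_insert x _)
    · have hsub : (Finset.univ : Finset V) ⊆ {x, w} := by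
        intro b _
        have h' := hall b
        simp only [Set.mem_insert_iff, Set.mem_singleton_iff] at h'
        rcases h' with rfl | rfl <;> simp
      have := Finset.card_le_card hsub
      rw [Finset.card_univ] at this
      have h2 : ({x, w} : Finset V).card ≤ 2 := Finset.card_insert_le _ _ |>.trans (by simp)
      omega
    · rintro a b (rfl | ha) hab
      · have hb : b ∈ G.neighborFinset a := (mem_neighborFinset G a b).2 hab
        rw [hNx] at hb
        exact Or.inr (Finset.mem_singleton.1 hb)
      · have ha2 : a = w := ha
        subst ha2
        have hb : b ∈ G.neighborFinset a := (mem_neighborFinset G a b).2 hab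
        rw [hNw] at hb
        exact Or.inl (Finset.mem_singleton.1 hb)

end TrivAux

namespace TrivAux

variable {V : Type*} [Fintype V] [DecidableEq V] {G : SimpleGraph V} [DecidableRel G.Adj]
  {v : V → ℝ} {l : ℝ}

variable (hconn : G.Connected) (huni : G.edgeFinset.card = Fintype.card V)
  (heig : G.lapMatrix ℝ *ᵥ v = l • v) (htri : ∀ i, v i = -1 ∨ v i = 0 ∨ v i = 1)
  (hnel : ∀ i j, G.Adj i j → v i ≠ v j)

include hconn huni heig htri hnel in
lemma no_leaf {x : V} (hd : G.degree x = 1) : False := by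
  rcases htri x with h | h | h
  · refine no_leaf_pos (v := -v) (l := l) hconn huni ?_ ?_ ?_ (x := x) ?_ hd
    · rw [Matrix.mulVec_neg, heig, smul_neg]
    · intro i
      rcases htri i with h' | h' | h' <;> simp [h']
    · intro i j hij h'
      exact hnel i j hij (neg_inj.1 h')
    · simp [h]
  · obtain ⟨_, h2⟩ := at0 heig htri hnel h
    omega
  · exact no_leaf_pos hconn huni heig htri hnel h hd

include hconn huni heig htri hnel in
lemma two_regular : ∀ x, G.degree x = 2 := by
  have hcard := card3 hconn huni
  have hdpos := degpos hconn (V := V) (by omega)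
  have hmin2 : ∀ x, 2 ≤ G.degree x := by
    intro x
    have h1 := hdpos x
    have h2 : G.degree x ≠ 1 := fun h => no_leaf hconn huni heig htri hnel h
    omega
  intro x
  by_contra hx
  have hlt : ∑ y : V, 2 < ∑ y : V, G.degree y :=
    Finset.sum_lt_sum (fun y _ => hmin2 y) ⟨x, Finset.mem_univ x, by have := hmin2 x; omega⟩
  rw [G.sum_degrees_eq_twice_card_edges, huni] at hlt
  have hl2 : ∑ _y : V, (2:ℕ) = 2 * Fintype.card V := by
    simp [Finset.sum_const, Finset.card_univ, mul_comm]
  omega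

end TrivAux

namespace TrivAux

variable {V : Type*} [Fintype V] [DecidableEq V] {G : SimpleGraph V} [DecidableRel G.Adj]
  {v : V → ℝ} {l : ℝ}

lemma empty_nb {x : V} {c : ℝ} (h : #{u ∈ G.neighborFinset x | v u = c} = 0) :
    ∀ u, G.Adj x u → v u ≠ c := by
  intro u hu hc
  have hmem : u ∈ {w ∈ G.neighborFinset x | v w = c} := by
    simp [mem_neighborFinset, hu, hc]
  rw [Finset.card_eq_zero.1 h] at hmem
  exact absurd hmem (Finset.notMem_empty u)

lemma ex_nb {x : V} {c : ℝ} (h : 1 ≤ #{u ∈ G.neighborFinset x | v u = c}) :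
    ∃ u, G.Adj x u ∧ v u = c := by
  obtain ⟨u, hu⟩ := Finset.card_pos.1 h
  rw [Finset.mem_filter, mem_neighborFinset] at hu
  exact ⟨u, hu.1, hu.2⟩

lemma le_one_nb {x : V} {c : ℝ} {a b : V} (h : #{u ∈ G.neighborFinset x | v u = c} ≤ 1)
    (ha : G.Adj x a) (hb : G.Adj x b) (hab : a ≠ b) (hva : v a = c) : v b ≠ c := by
  intro hvb
  have hsub : ({a, b} : Finset V) ⊆ {u ∈ G.neighborFinset x | v u = c} := by
    intro u hu
    rcases Finset.mem_insert.1 hu with rfl | hu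
    · simp [mem_neighborFinset, ha, hva]
    · rw [Finset.mem_singleton.1 hu]
      simp [mem_neighborFinset, hb, hvb]
  have := Finset.card_le_card hsub
  rw [Finset.card_pair hab] at this
  omega

lemma all_nb {x : V} {c : ℝ} (h : G.degree x ≤ #{u ∈ G.neighborFinset x | v u = c}) :
    ∀ u, G.Adj x u → v u = c := by
  intro u hu
  exact filter_all (by rw [card_neighborFinset_eq_degree]; exact h) u
    ((mem_neighborFinset G x u).2 hu)

variable (hconn : G.Connected) (huni : G.edgeFinset.card = Fintype.card V)
  (heig : G.lapMatrix ℝ *ᵥ v = l • v) (htri : ∀ i, v i = -1 ∨ v i = 0 ∨ v i = 1)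
  (hnel : ∀ i j, G.Adj i j → v i ≠ v j)

include hconn huni heig htri hnel in
lemma exists_pos (hv : v ≠ 0) : ∃ x, v x = 1 := by
  by_contra hno
  push_neg at hno
  obtain ⟨i, hi⟩ : ∃ i, v i ≠ 0 := by
    by_contra h2
    push_neg at h2
    exact hv (funext h2)
  have hvi : v i = -1 := by
    rcases htri i with h' | h' | h'
    exacts [h', absurd h' hi, absurd h' (hno i)]
  have hcard := card3 hconn huni
  have hdpos := degpos hconn (V := V) (by omega)
  obtain ⟨u, hu⟩ := G.degree_pos_iff_exists_adj i |>.1 (hdpos i)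
  have hvu : v u = 0 := by
    rcases htri u with h' | h' | h'
    · exact absurd (hvi.trans h'.symm) (hnel i u hu)
    · exact h'
    · exact absurd h' (hno u)
  obtain ⟨hpm, hdeq⟩ := at0 heig htri hnel hvu
  have hpc0 : pc G v u = 0 := by
    rw [pc, Finset.card_eq_zero, Finset.filter_eq_empty_iff]
    intro z _
    exact hno z
  rw [hpc0] at hdeq
  have := hdpos u
  omega

lemma cycle_structure (hconn : G.Connected) (hreg : ∀ x, G.degree x = 2)
    (hcard : 3 ≤ Fintype.card V) {x0 y0 : V} (hxy : G.Adj x0 y0) :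
    ∃ (f : ℕ → V) (φ : G ≃g cycleGraph (Fintype.card V)),
      f 0 = x0 ∧ f 1 = y0 ∧
      (∀ k, G.Adj (f k) (f (k + 1))) ∧
      (∀ k, f (k + 2) ≠ f k) ∧
      (∀ k z, G.Adj (f (k + 1)) z → z = f k ∨ z = f (k + 2)) ∧
      (∀ k, f (k + Fintype.card V) = f k) ∧
      (∀ i : Fin (Fintype.card V), φ.symm i = f i.val) := by
  classical
  -- the "other neighbor" function
  have hnext : ∀ a b : V, ∃ c, G.Adj a b →
      (G.Adj b c ∧ c ≠ a ∧ ∀ z, G.Adj b z → z = a ∨ z = c) := by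
    intro a b
    by_cases hab : G.Adj a b
    · have h2 : (G.neighborFinset b).card = 2 := by
        rw [card_neighborFinset_eq_degree]; exact hreg b
      obtain ⟨c, d, hcd, hN⟩ := Finset.card_eq_two.1 h2
      have hmem : ∀ z, G.Adj b z ↔ (z = c ∨ z = d) := by
        intro z
        rw [← mem_neighborFinset, hN]
        simp
      have haN : a = c ∨ a = d := (hmem a).1 hab.symm
      rcases haN with rfl | rfl
      · exact ⟨d, fun _ => ⟨(hmem d).2 (Or.inr rfl), fun h => hcd h.symm,
          fun z hz => (hmem z).1 hz⟩⟩
      · exact ⟨c, fun _ => ⟨(hmem c).2 (Or.inl rfl), fun h => hcd h,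
          fun z hz => ((hmem z).1 hz).symm⟩⟩
    · exact ⟨a, fun h => absurd h hab⟩
  choose nxt hnxt using hnext
  -- the walk function
  let F : ℕ → V × V := fun n => Nat.rec (x0, y0) (fun _ p => (p.2, nxt p.1 p.2)) n
  let f : ℕ → V := fun n => (F n).1
  have hf0 : f 0 = x0 := rfl
  have hf1 : f 1 = y0 := rfl
  have hf2 : ∀ k, f (k + 2) = nxt (f k) (f (k + 1)) := fun k => rfl
  have hI : ∀ k, G.Adj (f k) (f (k + 1)) := by
    intro k
    induction k with
    | zero => exact hxy
    | succ k ih =>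
      have h := hnxt (f k) (f (k + 1)) ih
      rw [show k + 1 + 1 = k + 2 from rfl, hf2 k]
      exact h.1
  have hI2 : ∀ k, f (k + 2) ≠ f k := by
    intro k
    rw [hf2 k]
    exact (hnxt (f k) (f (k + 1)) (hI k)).2.1
  have hI3 : ∀ k z, G.Adj (f (k + 1)) z → z = f k ∨ z = f (k + 2) := by
    intro k z hz
    rw [hf2 k]
    exact (hnxt (f k) (f (k + 1)) (hI k)).2.2 z hz
  -- forward determinism
  have hdet : ∀ a b, f a = f b → f (a + 1) = f (b + 1) → ∀ k, f (a + k) = f (b + k) := by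
    intro a b h0 h1 k
    induction k using Nat.strong_induction_on with
    | _ k ih =>
      match k with
      | 0 => exact h0
      | 1 => exact h1
      | (k + 2) =>
        have e1 : a + (k + 2) = (a + k) + 2 := by omega
        have e2 : b + (k + 2) = (b + k) + 2 := by omega
        rw [e1, e2, hf2, hf2, ih k (by omega), show (a+k)+1 = a + (k+1) from by omega,
          show (b+k)+1 = b + (k+1) from by omega, ih (k+1) (by omega)]
  -- backward determinism
  have hback : ∀ a b, f (a + 1) = f (b + 1) → f (a + 2) = f (b + 2) → f a = f b := by
    intro a b h1 h2
    have hadj : G.Adj (f (b + 1)) (f a) := by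
      rw [← h1]; exact (hI a).symm
    rcases hI3 b (f a) hadj with h | h
    · exact h
    · exfalso
      apply hI2 a
      rw [h2, h]
  -- periodicity from a repetition
  have hper_of : ∀ i p, 0 < p → f i = f (i + p) → f (i + 1) = f (i + p + 1) →
      ∀ k, f (k + p) = f k := by
    intro i p hp h0 h1 k
    have A : ∀ t, f (i + t) = f (i + p + t) := hdet i (i + p) h0 h1
    rcases le_or_gt i k with h | h
    · have := A (k - i)
      rw [show i + (k - i) = k from by omega, show i + p + (k - i) = k + p from by omega] at this
      exact this.symm
    · -- downward induction
      have B : ∀ t k', k' + t = i → f (k' + p) = f k' ∧ f (k' + p + 1) = f (k' + 1) := by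
        intro t
        induction t with
        | zero =>
          intro k' hk'
          rw [show k' = i from by omega]
          refine ⟨h0.symm, ?_⟩
          have := A 1
          rw [show i + 1 = i + 1 from rfl] at this
          exact this.symm
        | succ t ih =>
          intro k' hk'
          obtain ⟨g0, g1⟩ := ih (k' + 1) (by omega)
          have hb := hback (k' + p) k' ?_ ?_
          · exact ⟨hb, by rw [show k' + p + 1 = (k' + 1) + p from by omega, g0]⟩
          · rw [show k' + p + 1 = (k' + 1) + p from by omega, g0]
          · rw [show k' + p + 2 = (k' + 1) + p + 1 from by omega, g1]
      exact (B (i - k) k (by omega)).1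
  -- a repetition exists (pigeonhole)
  have hrep : ∃ i p, 0 < p ∧ f i = f (i + p) ∧ f (i + 1) = f (i + p + 1) := by
    have hninj : ¬ Function.Injective
        (fun k : Fin (Fintype.card (V × V) + 1) => (f k.val, f (k.val + 1))) := by
      intro hinj
      have := Fintype.card_le_of_injective _ hinj
      simp only [Fintype.card_fin, Fintype.card_prod] at this
      omega
    rw [Function.not_injective_iff] at hninj
    obtain ⟨a, b, hab, hne⟩ := hninj
    have h1 : f a.val = f b.val := congrArg Prod.fst hab
    have h2 : f (a.val + 1) = f (b.val + 1) := congrArg Prod.snd hab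
    rcases lt_or_gt_of_ne (fun h => hne (Fin.ext h)) with h | h
    · exact ⟨a.val, b.val - a.val, by omega,
        by rw [show a.val + (b.val - a.val) = b.val from by omega]; exact h1,
        by rw [show a.val + (b.val - a.val) + 1 = b.val + 1 from by omega]; exact h2⟩
    · exact ⟨b.val, a.val - b.val, by omega,
        by rw [show b.val + (a.val - b.val) = a.val from by omega]; exact h1.symm,
        by rw [show b.val + (a.val - b.val) + 1 = a.val + 1 from by omega]; exact h2.symm⟩
  have hPex : ∃ q, 0 < q ∧ ∀ k, f (k + q) = f k := by
    obtain ⟨i, p, hp, h0, h1⟩ := hrep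
    exact ⟨p, hp, hper_of i p hp h0 h1⟩
  let p0 := Nat.find hPex
  obtain ⟨hp0pos, hp0per⟩ : 0 < p0 ∧ ∀ k, f (k + p0) = f k := Nat.find_spec hPex
  have hmin : ∀ q, q < p0 → ¬ (0 < q ∧ ∀ k, f (k + q) = f k) := fun q hq => Nat.find_min hPex hq
  -- injectivity below the minimal period
  have key : ∀ a b, a < b → b < p0 → f a = f b → False := by
    intro a b hab hb hfab
    have hadj : G.Adj (f ((b - 1) + 1)) (f (a + 1)) := by
      rw [show (b - 1) + 1 = b from by omega, ← hfab]
      exact hI a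
    rcases hI3 (b - 1) (f (a + 1)) hadj with h | h
    · -- reversal case : f (a+1) = f (b-1)
      have R : ∀ t, t + 1 ≤ b - a → f (a + t) = f (b - t) ∧ f (a + t + 1) = f (b - t - 1) := by
        intro t
        induction t with
        | zero => intro _; exact ⟨by simpa using hfab, by simpa using h⟩
        | succ t ih =>
          intro ht
          obtain ⟨r0, r1⟩ := ih (by omega)
          constructor
          · rw [show a + (t + 1) = a + t + 1 from by omega,
              show b - (t + 1) = b - t - 1 from by omega]
            exact r1
          · have hadj2 : G.Adj (f ((b - t - 2) + 1)) (f (a + t + 2)) := by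
              rw [show (b - t - 2) + 1 = b - t - 1 from by omega, ← r1]
              have h2 := hI (a + t + 1)
              rw [show a + t + 1 + 1 = a + t + 2 from by omega] at h2
              exact h2
            rcases hI3 (b - t - 2) _ hadj2 with h' | h'
            · rw [show a + (t + 1) + 1 = a + t + 2 from by omega,
                show b - (t + 1) - 1 = b - t - 2 from by omega]
              exact h'
            · exfalso
              rw [show (b - t - 2) + 2 = b - t from by omega] at h'
              apply hI2 (a + t)
              rw [h']
              exact r0.symm
      rcases Nat.even_or_odd (b - a) with ⟨t, ht⟩ | ⟨t, ht⟩
      · obtain ⟨r0, r1⟩ := R t (by omega)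
        apply hI2 (a + t - 1)
        rw [show a + t - 1 + 2 = a + t + 1 from by omega, r1]
        have hbt : b - t - 1 = a + t - 1 := by omega
        exact congrArg f hbt
      · obtain ⟨r0, r1⟩ := R t (by omega)
        have hbt : b - t = a + t + 1 := by omega
        exact (hI (a + t)).ne (r0.trans (congrArg f hbt))
    · -- period case : f (a+1) = f (b+1)
      rw [show (b - 1) + 2 = b + 1 from by omega] at h
      have hper := hper_of a (b - a) (by omega)
        (by rw [show a + (b - a) = b from by omega]; exact hfab)
        (by rw [show a + (b - a) + 1 = b + 1 from by omega]; exact h)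
      exact hmin (b - a) (by omega) ⟨by omega, hper⟩
  have hinj : ∀ a b, a < p0 → b < p0 → f a = f b → a = b := by
    intro a b ha hb hfab
    rcases lt_trichotomy a b with h | h | h
    · exact (key a b h hb hfab).elim
    · exact h
    · exact (key b a h ha hfab.symm).elim
  have hmod : ∀ k, f k = f (k % p0) := by
    intro k
    have hmul : ∀ t m, f (m + t * p0) = f m := by
      intro t
      induction t with
      | zero => simp
      | succ t ih =>
        intro m
        rw [show m + (t + 1) * p0 = (m + t * p0) + p0 from by ring, hp0per, ih]
    conv_lhs => rw [show k = k % p0 + (k / p0) * p0 from by rw [Nat.mod_add_div']]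
    exact hmul _ _
  have hle : p0 ≤ Fintype.card V := by
    have hfi : Function.Injective (fun k : Fin p0 => f k.val) := by
      intro a b h
      exact Fin.ext (hinj a.val b.val a.isLt b.isLt h)
    simpa using Fintype.card_le_of_injective _ hfi
  have hsurj : ∀ b, ∃ k, k < p0 ∧ f k = b := by
    have hallb : ∀ b, b ∈ Set.range f := by
      apply closed_univ G hconn (S := Set.range f) ?_ (a := x0) ⟨0, hf0⟩
      rintro x y ⟨k, rfl⟩ hxy2
      have hk : f k = f ((k + p0 - 1) + 1) := by
        rw [show (k + p0 - 1) + 1 = k + p0 from by omega, hp0per]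
      rw [hk] at hxy2
      rcases hI3 (k + p0 - 1) y hxy2 with h | h
      · exact ⟨k + p0 - 1, h.symm⟩
      · exact ⟨k + p0 - 1 + 2, h.symm⟩
    intro b
    obtain ⟨k, hk⟩ := hallb b
    exact ⟨k % p0, Nat.mod_lt _ hp0pos, by rw [← hmod]; exact hk⟩
  have hge : Fintype.card V ≤ p0 := by
    have hfs : Function.Surjective (fun k : Fin p0 => f k.val) := by
      intro b
      obtain ⟨k, hk, hfk⟩ := hsurj b
      exact ⟨⟨k, hk⟩, hfk⟩
    simpa using Fintype.card_le_of_surjective _ hfs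
  have hp0n : p0 = Fintype.card V := le_antisymm hle hge
  rw [← hp0n]
  have hc3 : 3 ≤ p0 := by omega
  have hfinj : ∀ a b : ℕ, f a = f b → a % p0 = b % p0 := by
    intro a b h
    exact hinj (a % p0) (b % p0) (Nat.mod_lt _ hp0pos) (Nat.mod_lt _ hp0pos)
      (by rw [← hmod, ← hmod]; exact h)
  have hfeq : ∀ a b : ℕ, a % p0 = b % p0 → f a = f b := by
    intro a b h
    rw [hmod a, hmod b, h]
  have hadj_iff : ∀ i j : Fin p0,
      G.Adj (f i.val) (f j.val) ↔ (cycleGraph p0).Adj i j := by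
    intro i j
    have hiv : i.val < p0 := i.isLt
    have hjv : j.val < p0 := j.isLt
    rw [cycleGraph_adj']
    have hsub : ∀ u w : Fin p0, (u - w).val = ((p0 - w.val) + u.val) % p0 := by
      intro u w
      rw [Fin.sub_def]
    constructor
    · intro h
      have hk : f i.val = f ((i.val + p0 - 1) + 1) := by
        rw [show (i.val + p0 - 1) + 1 = i.val + p0 from by omega, hp0per]
      rw [hk] at h
      rcases hI3 (i.val + p0 - 1) _ h with h' | h'
      · -- f j = f (i + p0 - 1) : j ≡ i - 1, so i - j = 1
        left
        have hm := hfinj j.val (i.val + p0 - 1) h'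
        rw [Nat.mod_eq_of_lt hjv] at hm
        rw [hsub]
        rcases Nat.eq_zero_or_pos i.val with hi0 | hi1
        · rw [hi0, show 0 + p0 - 1 = p0 - 1 from by omega,
            Nat.mod_eq_of_lt (by omega)] at hm
          rw [hm, hi0, show p0 - (p0 - 1) + 0 = 1 from by omega, Nat.mod_eq_of_lt (by omega)]
        · rw [show i.val + p0 - 1 = p0 + (i.val - 1) from by omega, Nat.add_mod_left,
            Nat.mod_eq_of_lt (by omega)] at hm
          rw [hm, show p0 - (i.val - 1) + i.val = p0 + 1 from by omega, Nat.add_mod_left,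
            Nat.mod_eq_of_lt (by omega)]
      · -- f j = f (i + p0 + 1) : j ≡ i + 1, so j - i = 1
        right
        have hm := hfinj j.val (i.val + p0 - 1 + 2) h'
        rw [Nat.mod_eq_of_lt hjv, show i.val + p0 - 1 + 2 = p0 + (i.val + 1) from by omega,
          Nat.add_mod_left] at hm
        rw [hsub]
        rcases Nat.lt_or_ge (i.val + 1) p0 with hlt | hge'
        · rw [Nat.mod_eq_of_lt hlt] at hm
          rw [hm, show p0 - i.val + (i.val + 1) = p0 + 1 from by omega, Nat.add_mod_left,
            Nat.mod_eq_of_lt (by omega)]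
        · have hieq : i.val = p0 - 1 := by omega
          rw [show i.val + 1 = p0 from by omega, Nat.mod_self] at hm
          rw [hm, hieq, show p0 - (p0 - 1) + 0 = 1 from by omega, Nat.mod_eq_of_lt (by omega)]
    · intro h
      have hstep : ∀ u w : Fin p0, w.val % p0 = (u.val + 1) % p0 →
          G.Adj (f u.val) (f w.val) := by
        intro u w hm
        have heq : f w.val = f (u.val + 1) := hfeq _ _ hm
        rw [heq]
        exact hI u.val
      rcases h with h | h
      · -- (i - j).val = 1 : i = j + 1 mod p0
        refine (hstep j i ?_).symm
        rw [hsub] at h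
        rcases Nat.lt_or_ge ((p0 - j.val) + i.val) p0 with hlt | hge'
        · rw [Nat.mod_eq_of_lt hlt] at h
          -- p0 - j + i = 1 : i = 0, j = p0 - 1
          rw [Nat.mod_eq_of_lt hiv, show j.val + 1 = p0 from by omega, Nat.mod_self]
          omega
        · rw [Nat.mod_eq_sub_mod hge', Nat.mod_eq_of_lt (by omega)] at h
          rw [Nat.mod_eq_of_lt hiv, Nat.mod_eq_of_lt (show j.val + 1 < p0 from by omega)]
          omega
      · -- (j - i).val = 1 : j = i + 1 mod p0
        refine hstep i j ?_
        rw [hsub] at h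
        rcases Nat.lt_or_ge ((p0 - i.val) + j.val) p0 with hlt | hge'
        · rw [Nat.mod_eq_of_lt hlt] at h
          rw [Nat.mod_eq_of_lt hjv, show i.val + 1 = p0 from by omega, Nat.mod_self]
          omega
        · rw [Nat.mod_eq_sub_mod hge', Nat.mod_eq_of_lt (by omega)] at h
          rw [Nat.mod_eq_of_lt hjv, Nat.mod_eq_of_lt (show i.val + 1 < p0 from by omega)]
          omega
  have hbij : Function.Bijective (fun k : Fin p0 => f k.val) := by
    constructor
    · intro a b h
      exact Fin.ext (hinj a.val b.val a.isLt b.isLt h)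
    · intro b
      obtain ⟨k, hk, hfk⟩ := hsurj b
      exact ⟨⟨k, hk⟩, hfk⟩
  let e : Fin p0 ≃ V := Equiv.ofBijective _ hbij
  have he : ∀ i : Fin p0, e i = f i.val := fun i => rfl
  let ψ : cycleGraph p0 ≃g G := ⟨e, by intro a b; rw [he, he]; exact hadj_iff a b⟩
  exact ⟨f, ψ.symm, hf0, hf1, hI, hI2, hI3, hp0per, fun i => rfl⟩


end TrivAux

open TrivAux

/-- A connected unicyclic graph with a trivalent Laplacian eigenvector and no equal links
is a cycle: `C_{4k}` with `λ = 2` and pattern `(1,0,-1,0)`, `C_{3k}` with `λ = 3` and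
pattern `(1,0,-1)`, or `C_{2k}` with `λ = 4` and pattern `(1,-1)`. -/
theorem trivalent_unicyclic {V : Type*} [Fintype V] [DecidableEq V]
    (G : SimpleGraph V) [DecidableRel G.Adj] (hconn : G.Connected)
    (huni : G.edgeFinset.card = Fintype.card V)
    (v : V → ℝ) (hv : v ≠ 0) (l : ℝ)
    (heig : G.lapMatrix ℝ *ᵥ v = l • v)
    (htri : ∀ i, v i = -1 ∨ v i = 0 ∨ v i = 1)
    (hnel : ∀ i j, G.Adj i j → v i ≠ v j) :
    ∃ (m : ℕ) (φ : G ≃g cycleGraph m),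
      (l = 2 ∧ (∃ k, 1 ≤ k ∧ m = 4 * k) ∧
        ∀ i : Fin m, v (φ.symm i) =
          if (i : ℕ) % 4 = 0 then 1 else if (i : ℕ) % 4 = 2 then -1 else 0) ∨
      (l = 3 ∧ (∃ k, 1 ≤ k ∧ m = 3 * k) ∧
        ∀ i : Fin m, v (φ.symm i) =
          if (i : ℕ) % 3 = 0 then 1 else if (i : ℕ) % 3 = 2 then -1 else 0) ∨
      (l = 4 ∧ (∃ k, 2 ≤ k ∧ m = 2 * k) ∧
        ∀ i : Fin m, v (φ.symm i) = if (i : ℕ) % 2 = 0 then 1 else -1) := by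
  classical
  have hcard := card3 hconn huni
  have hreg := two_regular hconn huni heig htri hnel
  obtain ⟨x0, hx0⟩ := exists_pos hconn huni heig htri hnel hv
  -- local rules at each vertex
  have hat1 : ∀ x, v x = 1 → l = 2 + (mc G v x : ℝ) ∧ pc G v x = 0 := by
    intro x hx
    obtain ⟨hp, hl'⟩ := at1 heig htri hnel hx
    rw [hreg x] at hl'
    push_cast at hl'
    exact ⟨hl', hp⟩
  have hatm : ∀ x, v x = -1 → l = 2 + (pc G v x : ℝ) ∧ mc G v x = 0 := by
    intro x hx
    obtain ⟨hm', hl'⟩ := at_neg1 heig htri hnel hx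
    rw [hreg x] at hl'
    push_cast at hl'
    exact ⟨hl', hm'⟩
  have hat0 : ∀ x, v x = 0 → pc G v x = 1 ∧ mc G v x = 1 := by
    intro x hx
    obtain ⟨hpm, hd⟩ := at0 heig htri hnel hx
    rw [hreg x] at hd
    omega
  obtain ⟨hlx0, hpcx0⟩ := hat1 x0 hx0
  have hncard := nb_card G v htri x0
  rw [hreg x0, hpcx0] at hncard
  have hmc2 : mc G v x0 ≤ 2 := by omega
  have hdx0 : 0 < G.degree x0 := by rw [hreg x0]; omega
  rcases (by omega : mc G v x0 = 0 ∨ mc G v x0 = 1 ∨ mc G v x0 = 2) with hm | hm | hm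
  · -- ======== case l = 2 ========
    have hl2 : l = 2 := by rw [hlx0, hm]; norm_num
    have rule1 : ∀ x u, v x = 1 → G.Adj x u → v u = 0 := by
      intro x u hx hu
      obtain ⟨hlx, hpx⟩ := hat1 x hx
      have hmx : mc G v x = 0 := by
        have : (mc G v x : ℝ) = 0 := by linarith
        exact_mod_cast this
      rcases htri u with h | h | h
      · exact absurd h (empty_nb hmx u hu)
      · exact h
      · exact absurd h (empty_nb hpx u hu)
    have rulem : ∀ x u, v x = -1 → G.Adj x u → v u = 0 := by
      intro x u hx hu
      obtain ⟨hlx, hmx⟩ := hatm x hx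
      have hpx : pc G v x = 0 := by
        have : (pc G v x : ℝ) = 0 := by linarith
        exact_mod_cast this
      rcases htri u with h | h | h
      · exact absurd h (empty_nb hmx u hu)
      · exact h
      · exact absurd h (empty_nb hpx u hu)
    obtain ⟨y0, hy0adj⟩ := G.degree_pos_iff_exists_adj x0 |>.1 hdx0
    have hy0 : v y0 = 0 := rule1 x0 y0 hx0 hy0adj
    obtain ⟨f, φ, hf0, hf1, hI, hI2, hI3, hper, hφ⟩ :=
      cycle_structure hconn hreg hcard hy0adj
    have pat : ∀ k, (v (f k) = if k % 4 = 0 then 1 else if k % 4 = 2 then -1 else 0) ∧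
        (v (f (k + 1)) = if (k + 1) % 4 = 0 then 1 else if (k + 1) % 4 = 2 then -1 else 0) := by
      intro k
      induction k with
      | zero =>
        refine ⟨by rw [hf0, hx0]; norm_num, by rw [hf1, hy0]; norm_num⟩
      | succ k ih =>
        obtain ⟨h0, h1⟩ := ih
        refine ⟨h1, ?_⟩
        have hadj12 : G.Adj (f (k + 1)) (f (k + 1 + 1)) := hI (k + 1)
        rcases (by omega : k % 4 = 0 ∨ k % 4 = 1 ∨ k % 4 = 2 ∨ k % 4 = 3) with h4 | h4 | h4 | h4
        · rw [show (k + 1) % 4 = 1 from by omega] at h1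
          norm_num at h1
          rw [h4] at h0
          norm_num at h0
          obtain ⟨hp1, hm1⟩ := hat0 _ h1
          obtain ⟨u, huadj, huv⟩ := ex_nb (G := G) (v := v) (x := f (k + 1)) (c := -1) hm1.ge
          rcases hI3 k u huadj with rfl | rfl
          · rw [h0] at huv; norm_num at huv
          · rw [show (k + 1 + 1) % 4 = 2 from by omega]
            norm_num
            exact huv
        · rw [show (k + 1) % 4 = 2 from by omega] at h1
          norm_num at h1
          rw [show (k + 1 + 1) % 4 = 3 from by omega]
          norm_num
          exact rulem _ _ h1 hadj12
        · rw [show (k + 1) % 4 = 3 from by omega] at h1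
          norm_num at h1
          rw [h4] at h0
          norm_num at h0
          obtain ⟨hp1, hm1⟩ := hat0 _ h1
          obtain ⟨u, huadj, huv⟩ := ex_nb (G := G) (v := v) (x := f (k + 1)) (c := 1) hp1.ge
          rcases hI3 k u huadj with rfl | rfl
          · rw [h0] at huv; norm_num at huv
          · rw [show (k + 1 + 1) % 4 = 0 from by omega]
            norm_num
            exact huv
        · rw [show (k + 1) % 4 = 0 from by omega] at h1
          norm_num at h1
          rw [show (k + 1 + 1) % 4 = 1 from by omega]
          norm_num
          exact rule1 _ _ h1 hadj12
    have hfn : f (Fintype.card V) = f 0 := by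
      have h := hper 0
      rwa [Nat.zero_add] at h
    have hn4 : Fintype.card V % 4 = 0 := by
      have hp := (pat (Fintype.card V)).1
      rw [hfn, hf0, hx0] at hp
      by_contra h4
      rcases (by omega : Fintype.card V % 4 = 1 ∨ Fintype.card V % 4 = 2 ∨
        Fintype.card V % 4 = 3) with h | h | h <;> rw [h] at hp <;> norm_num at hp
    refine ⟨Fintype.card V, φ, Or.inl ⟨hl2, ⟨Fintype.card V / 4, by omega, by omega⟩, ?_⟩⟩
    intro i
    rw [hφ i]
    exact (pat i.val).1
  · -- ======== case l = 3 ========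
    have hl3 : l = 3 := by rw [hlx0, hm]; norm_num
    have rule1 : ∀ x, v x = 1 → mc G v x = 1 := by
      intro x hx
      obtain ⟨hlx, hpx⟩ := hat1 x hx
      have : (mc G v x : ℝ) = 1 := by linarith
      exact_mod_cast this
    have rulem : ∀ x, v x = -1 → pc G v x = 1 := by
      intro x hx
      obtain ⟨hlx, hmx⟩ := hatm x hx
      have : (pc G v x : ℝ) = 1 := by linarith
      exact_mod_cast this
    have hzc1 : 1 ≤ zc G v x0 := by omega
    obtain ⟨y0, hy0adj, hy0⟩ := ex_nb (G := G) (v := v) (x := x0) (c := 0) hzc1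
    obtain ⟨f, φ, hf0, hf1, hI, hI2, hI3, hper, hφ⟩ :=
      cycle_structure hconn hreg hcard hy0adj
    have pat : ∀ k, (v (f k) = if k % 3 = 0 then 1 else if k % 3 = 2 then -1 else 0) ∧
        (v (f (k + 1)) = if (k + 1) % 3 = 0 then 1 else if (k + 1) % 3 = 2 then -1 else 0) := by
      intro k
      induction k with
      | zero =>
        refine ⟨by rw [hf0, hx0]; norm_num, by rw [hf1, hy0]; norm_num⟩
      | succ k ih =>
        obtain ⟨h0, h1⟩ := ih
        refine ⟨h1, ?_⟩
        have hadj12 : G.Adj (f (k + 1)) (f (k + 1 + 1)) := hI (k + 1)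
        rcases (by omega : k % 3 = 0 ∨ k % 3 = 1 ∨ k % 3 = 2) with h3 | h3 | h3
        · -- v (f k) = 1, v (f (k+1)) = 0, next is -1
          rw [show (k + 1) % 3 = 1 from by omega] at h1
          norm_num at h1
          rw [h3] at h0
          norm_num at h0
          obtain ⟨hp1, hm1⟩ := hat0 _ h1
          obtain ⟨u, huadj, huv⟩ := ex_nb (G := G) (v := v) (x := f (k + 1)) (c := -1) hm1.ge
          rcases hI3 k u huadj with rfl | rfl
          · rw [h0] at huv; norm_num at huv
          · rw [show (k + 1 + 1) % 3 = 2 from by omega]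
            norm_num
            exact huv
        · -- v (f k) = 0, v (f (k+1)) = -1, next is 1
          rw [show (k + 1) % 3 = 2 from by omega] at h1
          norm_num at h1
          rw [show k % 3 = 1 from h3] at h0
          norm_num at h0
          have hpc1 := rulem _ h1
          obtain ⟨u, huadj, huv⟩ := ex_nb (G := G) (v := v) (x := f (k + 1)) (c := 1) hpc1.ge
          rcases hI3 k u huadj with rfl | rfl
          · rw [h0] at huv; norm_num at huv
          · rw [show (k + 1 + 1) % 3 = 0 from by omega]
            norm_num
            exact huv
        · -- v (f k) = -1, v (f (k+1)) = 1, next is 0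
          rw [show (k + 1) % 3 = 0 from by omega] at h1
          norm_num at h1
          rw [show k % 3 = 2 from h3] at h0
          norm_num at h0
          have hmc1 := rule1 _ h1
          have hne1 : v (f (k + 1 + 1)) ≠ -1 :=
            le_one_nb (G := G) (v := v) (x := f (k + 1)) (c := -1) hmc1.le (hI k).symm hadj12
              (Ne.symm (hI2 k)) h0
          have hne2 : v (f (k + 1 + 1)) ≠ 1 := fun h =>
            hnel _ _ hadj12 (by rw [h1, h])
          rw [show (k + 1 + 1) % 3 = 1 from by omega]
          norm_num
          rcases htri (f (k + 1 + 1)) with h | h | h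
          · exact absurd h hne1
          · exact h
          · exact absurd h hne2
    have hfn : f (Fintype.card V) = f 0 := by
      have h := hper 0
      rwa [Nat.zero_add] at h
    have hn3 : Fintype.card V % 3 = 0 := by
      have hp := (pat (Fintype.card V)).1
      rw [hfn, hf0, hx0] at hp
      by_contra h3
      rcases (by omega : Fintype.card V % 3 = 1 ∨ Fintype.card V % 3 = 2) with h | h <;>
        rw [h] at hp <;> norm_num at hp
    refine ⟨Fintype.card V, φ, Or.inr (Or.inl
      ⟨hl3, ⟨Fintype.card V / 3, by omega, by omega⟩, ?_⟩)⟩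
    intro i
    rw [hφ i]
    exact (pat i.val).1
  · -- ======== case l = 4 ========
    have hl4 : l = 4 := by rw [hlx0, hm]; norm_num
    have rule1 : ∀ x u, v x = 1 → G.Adj x u → v u = -1 := by
      intro x u hx hu
      obtain ⟨hlx, hpx⟩ := hat1 x hx
      have hmx : mc G v x = 2 := by
        have : (mc G v x : ℝ) = 2 := by linarith
        exact_mod_cast this
      exact all_nb (G := G) (v := v) (by rw [hreg x]; exact hmx.ge) u hu
    have rulem : ∀ x u, v x = -1 → G.Adj x u → v u = 1 := by
      intro x u hx hu
      obtain ⟨hlx, hmx⟩ := hatm x hx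
      have hpx : pc G v x = 2 := by
        have : (pc G v x : ℝ) = 2 := by linarith
        exact_mod_cast this
      exact all_nb (G := G) (v := v) (by rw [hreg x]; exact hpx.ge) u hu
    obtain ⟨y0, hy0adj⟩ := G.degree_pos_iff_exists_adj x0 |>.1 hdx0
    have hy0 : v y0 = -1 := rule1 x0 y0 hx0 hy0adj
    obtain ⟨f, φ, hf0, hf1, hI, hI2, hI3, hper, hφ⟩ :=
      cycle_structure hconn hreg hcard hy0adj
    have pat : ∀ k, v (f k) = if k % 2 = 0 then 1 else -1 := by
      intro k
      induction k with
      | zero => rw [hf0, hx0]; norm_num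
      | succ k ih =>
        have hadj01 : G.Adj (f k) (f (k + 1)) := hI k
        rcases (by omega : k % 2 = 0 ∨ k % 2 = 1) with h2 | h2
        · rw [h2] at ih
          norm_num at ih
          rw [show (k + 1) % 2 = 1 from by omega]
          norm_num
          exact rule1 _ _ ih hadj01
        · rw [h2] at ih
          norm_num at ih
          rw [show (k + 1) % 2 = 0 from by omega]
          norm_num
          exact rulem _ _ ih hadj01
    have hfn : f (Fintype.card V) = f 0 := by
      have h := hper 0
      rwa [Nat.zero_add] at h
    have hn2 : Fintype.card V % 2 = 0 := by
      have hp := pat (Fintype.card V)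
      rw [hfn, hf0, hx0] at hp
      by_contra h2
      rw [show Fintype.card V % 2 = 1 from by omega] at hp
      norm_num at hp
    refine ⟨Fintype.card V, φ, Or.inr (Or.inr
      ⟨hl4, ⟨Fintype.card V / 2, by omega, by omega⟩, ?_⟩)⟩
    intro i
    rw [hφ i]
    exact pat i.val
end

section
/- Let G be a connected graph that has a vertex of degree ≥ 3 and a vertex of degree 2 whose two neighbors both have degree 2, and suppose v is an eigenvector of L(G) with entries in {-1,0,1} and no edge joins equal-valued vertices. Then the eigenvalue λ satisfies 2 ≤ λ ≤ 4. -/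
open SimpleGraph Matrix Finset

/-- Key computation: at a nonzero degree-2 vertex, the eigenvalue is `2 + m` where `m` is the
number of nonzero neighbors, hence lies in `[2,4]`. -/
theorem aux_deg2_nonzero {V : Type*} [Fintype V] [DecidableEq V]
    (G : SimpleGraph V) [DecidableRel G.Adj]
    (v : V → ℝ) (l : ℝ)
    (heig : G.lapMatrix ℝ *ᵥ v = l • v)
    (htri : ∀ i, v i = -1 ∨ v i = 0 ∨ v i = 1)
    (hnel : ∀ i j, G.Adj i j → v i ≠ v j)
    (j : V) (hj : v j ≠ 0) (hdj : G.degree j = 2) :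
    2 ≤ l ∧ l ≤ 4 := by
  classical
  have hjv : v j = -1 ∨ v j = 1 := by rcases htri j with h | h | h <;> simp_all
  have heigj := congrFun heig j
  rw [Pi.smul_apply, smul_eq_mul, G.lapMatrix_mulVec_apply] at heigj
  set S := (G.neighborFinset j).filter (fun k => v k ≠ 0) with hS
  have hsum : ∑ u ∈ G.neighborFinset j, v u = -(S.card : ℝ) * v j := by
    rw [← Finset.sum_filter_add_sum_filter_not (G.neighborFinset j) (fun k => v k ≠ 0)]
    have h1 : ∑ u ∈ S, v u = S.card * (-(v j)) := by
      rw [Finset.sum_congr rfl (fun k hk => ?_), Finset.sum_const, nsmul_eq_mul]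
      · rw [Finset.mem_filter, SimpleGraph.mem_neighborFinset] at hk
        have hne := hnel j k hk.1
        rcases htri k with h | h | h <;> rcases hjv with h' | h' <;>
          simp_all
    have h2 : ∑ u ∈ (G.neighborFinset j).filter (fun k => ¬ v k ≠ 0), v u = 0 := by
      apply Finset.sum_eq_zero
      intro k hk
      rw [Finset.mem_filter] at hk
      simpa using hk.2
    rw [h1, h2]; ring
  rw [hsum, hdj] at heigj
  have hcard : S.card ≤ 2 := by
    calc S.card ≤ (G.neighborFinset j).card := Finset.card_filter_le _ _
    _ = 2 := by rw [← hdj]; rfl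
  have hl : l = 2 + S.card := by
    have : l * v j = (2 + S.card) * v j := by push_cast at heigj ⊢; linarith
    exact mul_right_cancel₀ hj this
  constructor
  · rw [hl]; have : (0:ℝ) ≤ S.card := Nat.cast_nonneg _; linarith
  · rw [hl]
    have : (S.card : ℝ) ≤ 2 := by exact_mod_cast hcard
    linarith

/-- If a connected graph has a vertex of degree `≥ 3` and a degree-2 vertex both of whose
neighbors have degree `2`, then any trivalent Laplacian eigenvector without equal links has
eigenvalue `λ` with `2 ≤ λ ≤ 4`. -/
theorem trivalent_eigenvalue_between_two_and_four {V : Type*} [Fintype V] [DecidableEq V]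
    (G : SimpleGraph V) [DecidableRel G.Adj] (hconn : G.Connected)
    (hdeg3 : ∃ u, 3 ≤ G.degree u)
    (hdeg2 : ∃ w, G.degree w = 2 ∧ ∀ x ∈ G.neighborFinset w, G.degree x = 2)
    (v : V → ℝ) (hv : v ≠ 0) (l : ℝ)
    (heig : G.lapMatrix ℝ *ᵥ v = l • v)
    (htri : ∀ i, v i = -1 ∨ v i = 0 ∨ v i = 1)
    (hnel : ∀ i j, G.Adj i j → v i ≠ v j) :
    2 ≤ l ∧ l ≤ 4 := by
  obtain ⟨w, hw2, hwn⟩ := hdeg2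
  by_cases hw : v w ≠ 0
  · exact aux_deg2_nonzero G v l heig htri hnel w hw hw2
  · push_neg at hw
    have hne : (G.neighborFinset w).Nonempty := by
      rw [← Finset.card_pos, ← G.card_neighborFinset_eq_degree] at *
      omega
    obtain ⟨x, hx⟩ := hne
    have hadj : G.Adj w x := by rwa [← SimpleGraph.mem_neighborFinset]
    have hxne : v x ≠ 0 := fun h => hnel w x hadj (by rw [hw, h])
    exact aux_deg2_nonzero G v l heig htri hnel x hxne (hwn x hx)
end

section
/- A connected cactus graph with at least two cycles and minimum degree at least 3 does not exist; equivalently, every finite connected cactus graph with more than one cycle has a vertex of degree at most 2. Consequently, a cactus graph with more than one cycle and no edge joining equal-valued vertices cannot admit a Laplacian eigenvector with all entries in {-1,1}. -/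
open SimpleGraph Matrix

/-- A cactus graph: a connected graph in which any two cycles share at most one vertex. -/
def IsCactus {V : Type*} [DecidableEq V] (G : SimpleGraph V) : Prop :=
  G.Connected ∧
    ∀ (a b : V) (c₁ : G.Walk a a) (c₂ : G.Walk b b), c₁.IsCycle → c₂.IsCycle →
      c₁.edges.toFinset ≠ c₂.edges.toFinset →
      (c₁.support.toFinset ∩ c₂.support.toFinset).card ≤ 1

/-- In a path, the only edge incident to the initial vertex is the first edge. -/
lemma edge_start_of_path {V : Type*} {G : SimpleGraph V} {u v x : V}
    (p : G.Walk u v) (hp : p.IsPath) (hx : s(u, x) ∈ p.edges) : x = p.getVert 1 := by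
  cases p with
  | nil => simp at hx
  | @cons _ b _ h q =>
    rw [SimpleGraph.Walk.edges_cons, List.mem_cons] at hx
    rcases hx with hx | hx
    · rw [Sym2.eq_iff] at hx
      rcases hx with ⟨-, rfl⟩ | ⟨rfl, rfl⟩
      · exact (SimpleGraph.Walk.snd_cons _ _).symm
      · exact absurd rfl h.ne
    · exfalso
      have hu : u ∈ q.support := q.fst_mem_support_of_mem_edges hx
      rw [SimpleGraph.Walk.cons_isPath_iff] at hp
      exact hp.2 hu

/-- `takeUntil` preserves the second vertex when the target is not the start. -/
lemma getVert_one_takeUntil {V : Type*} [DecidableEq V] {G : SimpleGraph V} {u v w : V}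
    (p : G.Walk u v) (h : w ∈ p.support) (hw : w ≠ u) :
    (p.takeUntil w h).getVert 1 = p.getVert 1 := by
  cases p with
  | nil =>
    exact absurd (SimpleGraph.Walk.mem_support_nil_iff.mp h) hw
  | @cons _ b _ r q =>
    have hx : ¬ u = w := fun e => hw e.symm
    rw [SimpleGraph.Walk.takeUntil]
    simp only [hx, dite_false]
    exact (SimpleGraph.Walk.snd_cons _ _).trans (SimpleGraph.Walk.snd_cons _ _).symm

/-- Every connected cactus graph with more than one cycle (cyclomatic number `≥ 2`) has a
vertex of degree at most `2`; consequently, no cactus graph with more than one cycle and no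
equal links admits a bivalent (`{-1,1}`-valued) Laplacian eigenvector. -/
theorem cactus_not_bivalent {V : Type*} [Fintype V] [DecidableEq V]
    (G : SimpleGraph V) [DecidableRel G.Adj] (hcactus : IsCactus G)
    (hcyc : Fintype.card V + 1 ≤ G.edgeFinset.card) :
    (∃ x, G.degree x ≤ 2) ∧
    (∀ (v : V → ℝ) (l : ℝ), G.lapMatrix ℝ *ᵥ v = l • v →
      (∀ i, v i = 1 ∨ v i = -1) → (∀ i j, G.Adj i j → v i ≠ v j) → False) := by
  classical
  -- V is nonempty
  have hVne : Nonempty V := by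
    by_contra hE
    rw [not_nonempty_iff] at hE
    have h0 : Fintype.card V = 0 := Fintype.card_eq_zero
    have : G.edgeFinset = ∅ := by
      ext e
      induction e using Sym2.ind with
      | _ x y => exact (hE.false x).elim
    rw [this] at hcyc
    simp [h0] at hcyc
  -- Part 1: there is a vertex of degree at most 2
  have hA : ∃ x, G.degree x ≤ 2 := by
    by_contra hctr
    push_neg at hctr
    -- take a maximal path
    set P : ℕ → Prop := fun n => ∃ (u w : V) (p : G.Walk u w), p.IsPath ∧ p.length = n with hP
    obtain ⟨x0⟩ := hVne
    have hP0 : P 0 := ⟨x0, x0, SimpleGraph.Walk.nil, by simp, rfl⟩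
    set N := Nat.findGreatest P (Fintype.card V) with hN
    have hPN : P N := Nat.findGreatest_spec (Nat.zero_le _) hP0
    obtain ⟨a, b, p, hp, hlen⟩ := hPN
    have hmax : ∀ (u w : V) (q : G.Walk u w), q.IsPath → q.length ≤ N := by
      intro u w q hq
      exact Nat.le_findGreatest (le_of_lt hq.length_lt) ⟨u, w, q, hq, rfl⟩
    -- all neighbors of a lie on p
    have hnbr : ∀ z, G.Adj a z → z ∈ p.support := by
      intro z hz
      by_contra hzs
      have hq : (SimpleGraph.Walk.cons hz.symm p).IsPath := hp.cons hzs
      have := hmax _ _ _ hq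
      rw [SimpleGraph.Walk.length_cons, hlen] at this
      omega
    have hdeg : 2 < G.degree a := hctr a
    -- p is not nil
    have hnn : ¬ p.Nil := by
      intro hnil
      have hl0 : p.length = 0 := SimpleGraph.Walk.nil_iff_length_eq.mp hnil
      have hsl : p.support.length = 1 := by
        rw [SimpleGraph.Walk.length_support, hl0]
    -- pick a neighbor of a
      have hpos : 0 < G.degree a := by omega
      rw [← SimpleGraph.card_neighborFinset_eq_degree, Finset.card_pos] at hpos
      obtain ⟨z, hzmem⟩ := hpos
      have hz : G.Adj a z := (SimpleGraph.mem_neighborFinset _ _ _).mp hzmem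
      have hzsup := hnbr z hz
      obtain ⟨w, hw⟩ := List.length_eq_one_iff.mp hsl
      rw [hw] at hzsup
      have hasup : a ∈ p.support := p.start_mem_support
      rw [hw] at hasup
      simp at hzsup hasup
      exact hz.ne' (by rw [hzsup, hasup])
    set s := p.getVert 1 with hs
    have has : G.Adj a s := SimpleGraph.Walk.adj_snd hnn
    -- two neighbors distinct from s
    have h2 : 1 < ((G.neighborFinset a).erase s).card := by
      have h1 : (G.neighborFinset a).card - 1 ≤ ((G.neighborFinset a).erase s).card :=
        Finset.pred_card_le_card_erase
      rw [SimpleGraph.card_neighborFinset_eq_degree] at h1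
      omega
    obtain ⟨y, hy, z, hz, hyz⟩ := Finset.one_lt_card.mp h2
    obtain ⟨hys, hyn⟩ := Finset.mem_erase.mp hy
    obtain ⟨hzs, hzn⟩ := Finset.mem_erase.mp hz
    have hay : G.Adj a y := (SimpleGraph.mem_neighborFinset _ _ _).mp hyn
    have haz : G.Adj a z := (SimpleGraph.mem_neighborFinset _ _ _).mp hzn
    have hyp : y ∈ p.support := hnbr y hay
    have hzp : z ∈ p.support := hnbr z haz
    -- build the two cycles
    set qy := p.takeUntil y hyp with hqydef
    set qz := p.takeUntil z hzp with hqzdef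
    have hqy : qy.IsPath := hp.takeUntil hyp
    have hqz : qz.IsPath := hp.takeUntil hzp
    have hqys : qy.getVert 1 = s := getVert_one_takeUntil p hyp hay.ne'
    have hqzs : qz.getVert 1 = s := getVert_one_takeUntil p hzp haz.ne'
    -- key: s(a, t) ∈ q_*.edges would force t = s
    have hkey : ∀ (t t' : V) (ht' : t' ∈ p.support), t' ≠ a →
        s(a, t) ∈ (p.takeUntil t' ht').reverse.edges →
        t = (p.takeUntil t' ht').getVert 1 := by
      intro t t' ht' hta hmem
      rw [SimpleGraph.Walk.edges_reverse, List.mem_reverse] at hmem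
      exact edge_start_of_path _ (hp.takeUntil ht') hmem
    have hcy : (SimpleGraph.Walk.cons hay qy.reverse).IsCycle := by
      rw [SimpleGraph.Walk.cons_isCycle_iff]
      refine ⟨(SimpleGraph.Walk.isPath_reverse_iff _).mpr hqy, fun hmem => ?_⟩
      have := hkey y y hyp hay.ne' hmem
      rw [hqys] at this
      exact hys this
    have hcz : (SimpleGraph.Walk.cons haz qz.reverse).IsCycle := by
      rw [SimpleGraph.Walk.cons_isCycle_iff]
      refine ⟨(SimpleGraph.Walk.isPath_reverse_iff _).mpr hqz, fun hmem => ?_⟩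
      have := hkey z z hzp haz.ne' hmem
      rw [hqzs] at this
      exact hzs this
    -- the two cycles have different edge sets
    have hne : (SimpleGraph.Walk.cons hay qy.reverse).edges.toFinset ≠
        (SimpleGraph.Walk.cons haz qz.reverse).edges.toFinset := by
      intro heq
      have hmem1 : s(a, y) ∈ (SimpleGraph.Walk.cons hay qy.reverse).edges.toFinset := by
        simp [SimpleGraph.Walk.edges_cons]
      rw [heq] at hmem1
      rw [List.mem_toFinset, SimpleGraph.Walk.edges_cons, List.mem_cons] at hmem1
      rcases hmem1 with hmem1 | hmem1
      · rw [Sym2.eq_iff] at hmem1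
        rcases hmem1 with ⟨-, h'⟩ | ⟨h1, h2⟩
        · exact hyz h'
        · exact haz.ne h1
      · have := hkey y z hzp haz.ne' hmem1
        rw [hqzs] at this
        exact hys this
    -- cactus property gives intersection ≤ 1, but a and s are both in it
    have hcard := hcactus.2 a a _ _ hcy hcz hne
    have hsub : ({a, s} : Finset V) ⊆
        (SimpleGraph.Walk.cons hay qy.reverse).support.toFinset ∩
        (SimpleGraph.Walk.cons haz qz.reverse).support.toFinset := by
      have hsy : s ∈ qy.support := by
        rw [SimpleGraph.Walk.mem_support_iff_exists_getVert]
        refine ⟨1, hqys, ?_⟩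
        by_contra hlen1
        push_neg at hlen1
        interval_cases h : qy.length
        · exact hay.ne (SimpleGraph.Walk.eq_of_length_eq_zero h)
      have hsz : s ∈ qz.support := by
        rw [SimpleGraph.Walk.mem_support_iff_exists_getVert]
        refine ⟨1, hqzs, ?_⟩
        by_contra hlen1
        push_neg at hlen1
        interval_cases h : qz.length
        · exact haz.ne (SimpleGraph.Walk.eq_of_length_eq_zero h)
      intro t ht
      rw [Finset.mem_insert, Finset.mem_singleton] at ht
      rw [Finset.mem_inter, List.mem_toFinset, List.mem_toFinset,
        SimpleGraph.Walk.support_cons, SimpleGraph.Walk.support_cons]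
      rcases ht with rfl | rfl
      · exact ⟨List.mem_cons_self, List.mem_cons_self⟩
      · constructor
        · exact List.mem_cons_of_mem _ (by
            rw [SimpleGraph.Walk.support_reverse, List.mem_reverse]; exact hsy)
        · exact List.mem_cons_of_mem _ (by
            rw [SimpleGraph.Walk.support_reverse, List.mem_reverse]; exact hsz)
    have h2le : 2 ≤ ((SimpleGraph.Walk.cons hay qy.reverse).support.toFinset ∩
        (SimpleGraph.Walk.cons haz qz.reverse).support.toFinset).card := by
      have : ({a, s} : Finset V).card = 2 := by
        rw [Finset.card_insert_of_notMem (by simpa using has.ne), Finset.card_singleton]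
      rw [← this]
      exact Finset.card_le_card hsub
    omega
  refine ⟨hA, ?_⟩
  -- Part 2: no bivalent eigenvector
  intro v l hev hval hlink
  have hdeg : ∀ i, 2 * (G.degree i : ℝ) = l := by
    intro i
    have h1 := congrFun hev i
    rw [SimpleGraph.lapMatrix_mulVec_apply] at h1
    have hsum : ∑ u ∈ G.neighborFinset i, v u = -((G.degree i : ℝ) * v i) := by
      have heach : ∀ u ∈ G.neighborFinset i, v u = -v i := by
        intro u hu
        have hadj : G.Adj i u := (SimpleGraph.mem_neighborFinset _ _ _).mp hu
        have hne := hlink i u hadj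
        rcases hval i with hi | hi <;> rcases hval u with hu' | hu' <;>
          simp [hi, hu'] at hne ⊢
      rw [Finset.sum_congr rfl heach, Finset.sum_const,
        SimpleGraph.card_neighborFinset_eq_degree]
      simp [mul_comm]
    rw [hsum] at h1
    have hvi : v i ≠ 0 := by
      rcases hval i with h | h <;> rw [h] <;> norm_num
    have h2 : (2 * (G.degree i : ℝ)) * v i = l * v i := by
      rw [Pi.smul_apply, smul_eq_mul] at h1
      ring_nf
      ring_nf at h1
      linarith
    exact mul_right_cancel₀ hvi h2
  obtain ⟨x, hx⟩ := hA
  have hall : ∀ i, G.degree i ≤ 2 := by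
    intro i
    have h1 := hdeg i
    have h2 := hdeg x
    have h3 : (G.degree i : ℝ) = (G.degree x : ℝ) := by linarith
    have h4 : G.degree i = G.degree x := by exact_mod_cast h3
    omega
  have hsum := G.sum_degrees_eq_twice_card_edges
  have hle : ∑ w, G.degree w ≤ 2 * Fintype.card V := by
    calc ∑ w, G.degree w ≤ ∑ _w : V, 2 := Finset.sum_le_sum fun w _ => hall w
    _ = 2 * Fintype.card V := by rw [Finset.sum_const, Finset.card_univ]; ring
  omega
end
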